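/- arXiv:2110.15570 — 7 statements merged into one kernel-verified Lean document; each statement's English description precedes it below -/
import Mathlib

section
/- Let V be a finite-dimensional vector space over a field F, let A ∈ End(V), and let V = K ⊕ I be the Fitting decomposition of V with respect to A (i.e., A(K) ⊆ K, A(I) ⊆ I, A restricted to K is nilpotent, and A restricted to I is invertible). Let ζ ∈ F be nonzero. Then a linear map B ∈ End(V) satisfies A∘B = ζ·(B∘A) if and only if B(K) ⊆ K, B(I) ⊆ I, and the restrictions satisfy (A|_K)∘(B|_K) = ζ·(B|_K)∘(A|_K) and (A|_I)∘(B|_I) = ζ·(B|_I)∘(A|_I). -/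
/-- Fitting decomposition lemma: with `V = K ⊕ I` the Fitting decomposition for `A`
(`A|_K` nilpotent, `A|_I` invertible) and `ζ ≠ 0`, a linear map `B` satisfies
`A ∘ B = ζ • (B ∘ A)` iff `B` preserves `K` and `I` and the restrictions satisfy the
corresponding twisted commutation relations. -/
theorem fitting_zeta_commute {F V : Type*} [Field F] [AddCommGroup V] [Module F V]
    [FiniteDimensional F V] (A B : Module.End F V) (ζ : F) (hζ : ζ ≠ 0)
    (K I : Submodule F V) (hcompl : IsCompl K I)
    (hAK : ∀ x ∈ K, A x ∈ K) (hAI : ∀ x ∈ I, A x ∈ I)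
    (hnil : IsNilpotent (A.restrict hAK))
    (hinv : Function.Bijective (A.restrict hAI)) :
    A ∘ₗ B = ζ • (B ∘ₗ A) ↔
      ∃ (hBK : ∀ x ∈ K, B x ∈ K) (hBI : ∀ x ∈ I, B x ∈ I),
        A.restrict hAK ∘ₗ B.restrict hBK = ζ • (B.restrict hBK ∘ₗ A.restrict hAK) ∧
        A.restrict hAI ∘ₗ B.restrict hBI = ζ • (B.restrict hBI ∘ₗ A.restrict hAI) := by
  obtain ⟨n, hn⟩ := hnil
  -- A^n kills K
  have hKn : ∀ x ∈ K, (A ^ n) x = 0 := by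
    intro x hx
    have h1 : ((A.restrict hAK) ^ n) ⟨x, hx⟩ = 0 := by rw [hn]; rfl
    have h2 := Module.End.pow_restrict (f' := A) n hAK
    rw [h2] at h1
    have := congrArg Subtype.val h1
    simpa [LinearMap.restrict_coe_apply] using this
  -- A^n is injective on I
  have hInj : ∀ x ∈ I, (A ^ n) x = 0 → x = 0 := by
    intro x hx hx0
    have hinjn : Function.Injective ((A.restrict hAI) ^ n) := by
      rw [Module.End.coe_pow]
      exact Function.Injective.iterate hinv.injective n
    have h2 := Module.End.pow_restrict (f' := A) n hAI
    have : ((A.restrict hAI) ^ n) ⟨x, hx⟩ = ((A.restrict hAI) ^ n) 0 := by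
      rw [h2]; ext; simpa [LinearMap.restrict_coe_apply] using hx0
    have := hinjn this
    simpa using congrArg Subtype.val this
  -- everything killed by A^n lies in K
  have hkerK : ∀ y : V, (A ^ n) y = 0 → y ∈ K := by
    intro y hy
    obtain ⟨k, i, hk, hi, rfl⟩ := Submodule.codisjoint_iff_exists_add_eq.mp hcompl.codisjoint y
    have : (A ^ n) k + (A ^ n) i = 0 := by rw [← map_add]; exact hy
    rw [hKn k hk, zero_add] at this
    rw [hInj i hi this, add_zero]; exact hk
  -- the range of A^n lies in I
  have hranI : ∀ v : V, (A ^ n) v ∈ I := by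
    intro v
    obtain ⟨k, i, hk, hi, rfl⟩ := Submodule.codisjoint_iff_exists_add_eq.mp hcompl.codisjoint v
    rw [map_add, hKn k hk, zero_add]
    exact Module.End.pow_apply_mem_of_forall_mem n hAI i hi
  -- every element of I is A^n of something in I
  have hsurI : ∀ x ∈ I, ∃ y ∈ I, (A ^ n) y = x := by
    intro x hx
    have hsurjn : Function.Surjective ((A.restrict hAI) ^ n) := by
      rw [Module.End.coe_pow]
      exact Function.Surjective.iterate hinv.surjective n
    obtain ⟨⟨y, hy⟩, h⟩ := hsurjn ⟨x, hx⟩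
    refine ⟨y, hy, ?_⟩
    have h2 := Module.End.pow_restrict (f' := A) n hAI
    rw [h2] at h
    simpa [LinearMap.restrict_coe_apply, Subtype.ext_iff] using h
  constructor
  · intro h
    have hpt : ∀ v, A (B v) = ζ • B (A v) := by
      intro v
      have := congrFun (congrArg DFunLike.coe h) v
      simpa using this
    have hpow : ∀ (k : ℕ) (v : V), (A ^ k) (B v) = ζ ^ k • B ((A ^ k) v) := by
      intro k
      induction k with
      | zero => simp
      | succ k ih =>
        intro v
        calc (A ^ (k + 1)) (B v) = (A ^ k) (A (B v)) := by
              rw [pow_succ, Module.End.mul_apply]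
          _ = (A ^ k) (ζ • B (A v)) := by rw [hpt]
          _ = ζ • ((A ^ k) (B (A v))) := by rw [map_smul]
          _ = ζ • (ζ ^ k • B ((A ^ k) (A v))) := by rw [ih]
          _ = ζ ^ (k + 1) • B ((A ^ (k + 1)) v) := by
              rw [smul_smul, pow_succ A k, Module.End.mul_apply, pow_succ ζ k, mul_comm]
    have hBK : ∀ x ∈ K, B x ∈ K := by
      intro x hx
      apply hkerK
      rw [hpow n x, hKn x hx, map_zero, smul_zero]
    have hBI : ∀ x ∈ I, B x ∈ I := by
      intro x hx
      obtain ⟨y, hy, rfl⟩ := hsurI x hx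
      have : B ((A ^ n) y) = (ζ ^ n)⁻¹ • (A ^ n) (B y) := by
        rw [hpow n y, smul_smul, inv_mul_cancel₀ (pow_ne_zero n hζ), one_smul]
      rw [this]
      exact Submodule.smul_mem _ _ (hranI (B y))
    refine ⟨hBK, hBI, ?_, ?_⟩ <;>
    · ext x
      simpa [LinearMap.restrict_coe_apply, Subtype.ext_iff] using hpt x
  · rintro ⟨hBK, hBI, h1, h2⟩
    have hK : ∀ x ∈ K, A (B x) = ζ • B (A x) := by
      intro x hx
      have := congrFun (congrArg DFunLike.coe h1) ⟨x, hx⟩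
      simpa [LinearMap.restrict_coe_apply, Subtype.ext_iff] using congrArg Subtype.val this
    have hI : ∀ x ∈ I, A (B x) = ζ • B (A x) := by
      intro x hx
      have := congrFun (congrArg DFunLike.coe h2) ⟨x, hx⟩
      simpa [LinearMap.restrict_coe_apply, Subtype.ext_iff] using congrArg Subtype.val this
    ext v
    obtain ⟨k, i, hk, hi, rfl⟩ := Submodule.codisjoint_iff_exists_add_eq.mp hcompl.codisjoint v
    simp only [LinearMap.comp_apply, LinearMap.smul_apply, map_add, smul_add]
    rw [hK k hk, hI i hi]
end

section
/- Let F be a field, ζ ∈ F nonzero, and g a monic polynomial of degree d over F. The F[t]-module obtained from F[t]/(g(t)) by letting t act as multiplication by ζ·t is isomorphic to F[t]/(h(t)) where h(t) = ζ^d·g(ζ^{-1}t). -/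
open Polynomial

set_option synthInstance.maxHeartbeats 1000000 in
/-- The `F[t]`-module obtained from `F[t]/(g)` by letting `t` act as multiplication by
`ζ·t` is isomorphic to `F[t]/(h)` where `h(t) = ζ^d · g(ζ⁻¹ t)`. -/
theorem twisted_quotient_module_iso {F : Type*} [Field F] (ζ : F) (hζ : ζ ≠ 0)
    (g : F[X]) (hg : g.Monic) (d : ℕ) (hd : g.natDegree = d) :
    Nonempty (Module.AEval'
        (ζ • (Algebra.lmul F (F[X] ⧸ Ideal.span {g})
          (Ideal.Quotient.mk (Ideal.span {g}) X)) : Module.End F (F[X] ⧸ Ideal.span {g}))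
      ≃ₗ[F[X]] F[X] ⧸ Ideal.span {ζ ^ d • g.comp (C ζ⁻¹ * X)}) := by
  have hζd : ζ ^ d ≠ 0 := pow_ne_zero _ hζ
  have h1 : (C ζ⁻¹ * X).comp (C ζ * X) = X := by
    rw [mul_comp, C_comp, X_comp, ← mul_assoc, ← C_mul, inv_mul_cancel₀ hζ, C_1, one_mul]
  have h2 : (C ζ * X).comp (C ζ⁻¹ * X) = X := by
    rw [mul_comp, C_comp, X_comp, ← mul_assoc, ← C_mul, mul_inv_cancel₀ hζ, C_1, one_mul]
  let eF : F[X] ≃ₐ[F] F[X] := algEquivOfCompEqX (C ζ⁻¹ * X) (C ζ * X) h1 h2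
  have heF : ∀ p : F[X], eF p = p.comp (C ζ⁻¹ * X) := fun p => rfl
  have hIJ : Ideal.span {ζ ^ d • g.comp (C ζ⁻¹ * X)}
      = (Ideal.span {g}).map (eF : F[X] →+* F[X]) := by
    rw [Ideal.map_span, Set.image_singleton]
    have hg' : (eF : F[X] →+* F[X]) g = g.comp (C ζ⁻¹ * X) := heF g
    rw [hg', Ideal.span_singleton_eq_span_singleton]
    refine (Associated.symm ⟨(isUnit_C.2 hζd.isUnit).unit, ?_⟩)
    rw [IsUnit.unit_spec, smul_eq_C_mul, mul_comm]
  let e := (Ideal.quotientEquivAlg (Ideal.span {g})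
    (Ideal.span {ζ ^ d • g.comp (C ζ⁻¹ * X)}) eF hIJ).toLinearEquiv
  refine ⟨LinearEquiv.ofAEval _ e fun m => ?_⟩
  obtain ⟨p, rfl⟩ := Ideal.Quotient.mk_surjective m
  have he : ∀ q : F[X], e (Ideal.Quotient.mk (Ideal.span {g}) q)
      = Ideal.Quotient.mk (Ideal.span {ζ ^ d • g.comp (C ζ⁻¹ * X)}) (q.comp (C ζ⁻¹ * X)) :=
    fun q => rfl
  have ha : (ζ • (Algebra.lmul F (F[X] ⧸ Ideal.span {g})
      (Ideal.Quotient.mk (Ideal.span {g}) X)) : Module.End F (F[X] ⧸ Ideal.span {g})) •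
      (Ideal.Quotient.mk (Ideal.span {g}) p)
      = Ideal.Quotient.mk (Ideal.span {g}) (C ζ * X * p) := by
    show (ζ • (Algebra.lmul F (F[X] ⧸ Ideal.span {g})
      (Ideal.Quotient.mk (Ideal.span {g}) X)))
      (Ideal.Quotient.mk (Ideal.span {g}) p) = _
    rw [LinearMap.smul_apply, Algebra.coe_lmul_eq_mul, LinearMap.mul_apply', ← map_mul,
      ← Ideal.Quotient.mk_eq_mk, ← Submodule.Quotient.mk_smul, Ideal.Quotient.mk_eq_mk]
    congr 1
    rw [smul_eq_C_mul, mul_assoc]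
  rw [ha, he, he]
  conv_rhs => rw [← Ideal.Quotient.mk_eq_mk]
  rw [← Ideal.Quotient.mk_eq_mk, ← Submodule.Quotient.mk_smul]
  congr 1
  rw [smul_eq_mul]
  rw [mul_comp, mul_comp, C_comp, X_comp, ← mul_assoc, ← C_mul, mul_inv_cancel₀ hζ, C_1,
    one_mul]
end

section
/- Let q be a prime power and ζ ∈ F_q nonzero. Define U_{ζ,n}(F_q) = {(A,B) ∈ Mat_n(F_q)² : AB = ζBA, A invertible} and let S_{ζ,n}(F_q) be the set of similarity classes of n×n matrices B over F_q such that B is similar to ζB. Then |U_{ζ,n}(F_q)| = |GL_n(F_q)| · |S_{ζ,n}(F_q)|. -/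
namespace CardUAux

variable {F : Type*} [Field F] {n : ℕ}

abbrev Mx (F : Type*) (n : ℕ) := Matrix (Fin n) (Fin n) F

/-- conjugation action of units of the matrix ring on matrices -/
def act (g : (Mx F n)ˣ) (B : Mx F n) : Mx F n := (g : Mx F n) * B * ((g⁻¹ : (Mx F n)ˣ) : Mx F n)

lemma act_one (B : Mx F n) : act 1 B = B := by simp [act]

lemma act_act (g h : (Mx F n)ˣ) (B : Mx F n) : act g (act h B) = act (g * h) B := by
  simp [act, mul_assoc]

lemma act_smul (g : (Mx F n)ˣ) (a : F) (B : Mx F n) : act g (a • B) = a • act g B := by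
  simp [act, Matrix.smul_mul, Matrix.mul_smul]

lemma rel_iff (ζ : F) (u : (Mx F n)ˣ) (B : Mx F n) :
    (u : Mx F n) * B = ζ • (B * (u : Mx F n)) ↔ act u B = ζ • B := by
  constructor
  · intro h
    rw [act, h, Matrix.smul_mul, mul_assoc, ← Units.val_mul, mul_inv_cancel,
      Units.val_one, mul_one]
  · intro h
    have h2 : (u : Mx F n) * B * ((u⁻¹ : (Mx F n)ˣ) : Mx F n) * (u : Mx F n)
        = (ζ • B) * (u : Mx F n) := by rw [← act, h]
    rw [mul_assoc, ← Units.val_mul, inv_mul_cancel, Units.val_one, mul_one] at h2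
    rw [h2, Matrix.smul_mul]

lemma act_inv_smul {ζ : F} (hζ : ζ ≠ 0) (u : (Mx F n)ˣ)
    (B : Mx F n) (h : act u B = ζ • B) : act u⁻¹ B = ζ⁻¹ • B := by
  have h1 : act u⁻¹ (act u B) = act u⁻¹ (ζ • B) := by rw [h]
  rw [act_act, inv_mul_cancel, act_one, act_smul] at h1
  conv_rhs => rw [h1]
  rw [smul_smul, inv_mul_cancel₀ hζ, one_smul]

/-- The set of similarity classes, with units phrasing. -/
abbrev Sset (F : Type*) [Field F] (n : ℕ) (ζ : F) :=
  {O : Set (Mx F n) // ∃ B : Mx F n,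
    (∃ P : (Mx F n)ˣ, act P B = ζ • B) ∧
    O = {C | ∃ P : (Mx F n)ˣ, C = act P B}}

/-- The set `U`. -/
abbrev Uset (F : Type*) [Field F] (n : ℕ) (ζ : F) :=
  {p : Mx F n × Mx F n // p.1 * p.2 = ζ • (p.2 * p.1) ∧ IsUnit p.1}

variable {ζ : F}

noncomputable def rep (c : Sset F n ζ) : Mx F n := c.2.choose

lemma rep_orbit (c : Sset F n ζ) :
    c.1 = {C | ∃ P : (Mx F n)ˣ, C = act P (rep c)} := c.2.choose_spec.2

noncomputable def w (c : Sset F n ζ) : (Mx F n)ˣ := c.2.choose_spec.1.choose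

lemma w_spec (c : Sset F n ζ) : act (w c) (rep c) = ζ • rep c := c.2.choose_spec.1.choose_spec

open Classical in
noncomputable def sec (c : Sset F n ζ) (B : Mx F n) : (Mx F n)ˣ :=
  if h : ∃ P : (Mx F n)ˣ, B = act P (rep c) then h.choose else 1

lemma sec_spec (c : Sset F n ζ) (B : Mx F n)
    (h : ∃ P : (Mx F n)ˣ, B = act P (rep c)) :
    act (sec c B) (rep c) = B := by
  rw [sec, dif_pos h]
  exact h.choose_spec.symm

/-- the class of `x.1.2`. -/
noncomputable def mkClass (x : Uset F n ζ) : Sset F n ζ :=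
  ⟨{C | ∃ P : (Mx F n)ˣ, C = act P x.1.2},
   x.1.2, ⟨x.2.2.unit, by
      rw [← rel_iff, x.2.2.unit_spec]
      exact x.2.1⟩, rfl⟩

noncomputable def fwd (x : Uset F n ζ) : Sset F n ζ × (Mx F n)ˣ :=
  (mkClass x,
    sec (mkClass x) x.1.2 *
      ((w (mkClass x))⁻¹ * ((sec (mkClass x) x.1.2)⁻¹ * x.2.2.unit * sec (mkClass x) x.1.2)))

lemma mem_orbit_rep (x : Uset F n ζ) :
    ∃ P : (Mx F n)ˣ, x.1.2 = act P (rep (mkClass x)) := by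
  have h : x.1.2 ∈ (mkClass x).1 := ⟨1, (act_one _).symm⟩
  rwa [rep_orbit (mkClass x)] at h

/-- abstract computation used for `bwd`. -/
lemma key1 (s g w : (Mx F n)ˣ) (R : Mx F n) (hs : act s R = act g R) (hw : act w R = ζ • R) :
    act (s * w * (s⁻¹ * g) * s⁻¹) (act g R) = ζ • act g R := by
  have h1 : act (s⁻¹ * g) R = R := by
    rw [← act_act, ← hs, act_act, inv_mul_cancel, act_one]
  calc act (s * w * (s⁻¹ * g) * s⁻¹) (act g R)
      = act (s * w * (s⁻¹ * g) * s⁻¹) (act s R) := by rw [hs]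
    _ = act (s * w * (s⁻¹ * g) * s⁻¹ * s) R := by rw [act_act]
    _ = act (s * w * (s⁻¹ * g)) R := by group
    _ = act (s * w) (act (s⁻¹ * g) R) := by rw [act_act]
    _ = act s (act w R) := by rw [h1, act_act]
    _ = ζ • act g R := by rw [hw, act_smul, hs]

noncomputable def bwdU (y : Sset F n ζ × (Mx F n)ˣ) : (Mx F n)ˣ :=
  sec y.1 (act y.2 (rep y.1)) * w y.1 * ((sec y.1 (act y.2 (rep y.1)))⁻¹ * y.2) *
    (sec y.1 (act y.2 (rep y.1)))⁻¹

lemma bwdU_act (y : Sset F n ζ × (Mx F n)ˣ) :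
    act (bwdU y) (act y.2 (rep y.1)) = ζ • act y.2 (rep y.1) := by
  have hsec : act (sec y.1 (act y.2 (rep y.1))) (rep y.1) = act y.2 (rep y.1) :=
    sec_spec _ _ ⟨y.2, rfl⟩
  exact key1 _ _ _ _ hsec (w_spec y.1)

noncomputable def bwd (y : Sset F n ζ × (Mx F n)ˣ) : Uset F n ζ :=
  ⟨((bwdU y : Mx F n), act y.2 (rep y.1)),
    (rel_iff ζ (bwdU y) _).mpr (bwdU_act y), Units.isUnit _⟩

lemma left_inv (hζ : ζ ≠ 0) (x : Uset F n ζ) : bwd (fwd x) = x := by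
  obtain ⟨⟨A, B⟩, hrel, hA⟩ := x
  set x : Uset F n ζ := ⟨(A, B), hrel, hA⟩ with hx
  set c : Sset F n ζ := mkClass x with hc
  set R : Mx F n := rep c with hR
  set s : (Mx F n)ˣ := sec c B with hs
  set u : (Mx F n)ˣ := hA.unit with hu0
  have hu : (u : Mx F n) = A := hA.unit_spec
  have hur : act u B = ζ • B := by
    rw [← rel_iff, hu]; exact hrel
  have hsR : act s R = B := sec_spec c B (mem_orbit_rep x)
  have hwR : act (w c) R = ζ • R := w_spec c
  set g : (Mx F n)ˣ := s * ((w c)⁻¹ * (s⁻¹ * u * s)) with hg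
  -- claim 1 : act g R = B
  have claim1 : act g R = B := by
    have e1 : act (s⁻¹ * u * s) R = ζ • R := by
      rw [← mul_assoc] at *
      rw [← act_act, ← act_act, hsR, hur, act_smul]

      rw [← hsR, act_act, inv_mul_cancel, act_one]
    have e2 : act ((w c)⁻¹ * (s⁻¹ * u * s)) R = R := by
      rw [← act_act, e1, act_smul, act_inv_smul hζ _ _ hwR, smul_smul,
        mul_inv_cancel₀ hζ, one_smul]
    rw [hg, ← act_act, e2, hsR]
  have hfwd : fwd x = (c, g) := rfl
  rw [hfwd]
  apply Subtype.ext
  have hbact : act g (rep (c, g).1) = B := claim1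
  show ((bwdU (c, g) : Mx F n), act g (rep c)) = (A, B)
  have hsecg : sec c (act g (rep c)) = s := by
    rw [← hR, claim1, hs]
  have hbu : bwdU (c, g) = u := by
    show sec c (act g (rep c)) * w c * ((sec c (act g (rep c)))⁻¹ * g) *
        (sec c (act g (rep c)))⁻¹ = u
    rw [hsecg, hg]
    group
  rw [← hR, claim1, hbu, hu]

lemma right_inv (y : Sset F n ζ × (Mx F n)ˣ) : fwd (bwd y) = y := by
  obtain ⟨c, g⟩ := y
  set R : Mx F n := rep c with hR
  set B : Mx F n := act g R with hB
  set s : (Mx F n)ˣ := sec c B with hs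
  have hsR : act s R = B := sec_spec c B ⟨g, rfl⟩
  set u : (Mx F n)ˣ := bwdU (c, g) with hu
  have hbwd : bwd (c, g) = ⟨((u : Mx F n), B), (rel_iff ζ u B).mpr (bwdU_act (c, g)),
      Units.isUnit u⟩ := rfl
  have hc : mkClass (bwd (c, g)) = c := by
    apply Subtype.ext
    show {C | ∃ P : (Mx F n)ˣ, C = act P B} = c.1
    rw [rep_orbit c, ← hR]
    ext C
    constructor
    · rintro ⟨P, rfl⟩
      exact ⟨P * g, by rw [hB, act_act]⟩
    · rintro ⟨P, rfl⟩
      refine ⟨P * g⁻¹, ?_⟩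
      rw [hB, act_act]

      group
  have hunit : ((bwd (c, g)).2.2.unit : Mx F n) = (u : Mx F n) := (bwd (c, g)).2.2.unit_spec
  have hunit' : (bwd (c, g)).2.2.unit = u := Units.ext hunit
  show (mkClass (bwd (c, g)),
      sec (mkClass (bwd (c, g))) (bwd (c, g)).1.2 *
        ((w (mkClass (bwd (c, g))))⁻¹ *
          ((sec (mkClass (bwd (c, g))) (bwd (c, g)).1.2)⁻¹ * (bwd (c, g)).2.2.unit *
            sec (mkClass (bwd (c, g))) (bwd (c, g)).1.2))) = (c, g)
  rw [hc, hunit']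
  have hB2 : (bwd (c, g)).1.2 = B := rfl
  rw [hB2, ← hs]
  refine Prod.ext rfl ?_
  show s * ((w c)⁻¹ * (s⁻¹ * u * s)) = g
  rw [hu]
  show s * ((w c)⁻¹ * (s⁻¹ * (sec c (act g (rep c)) * w c * ((sec c (act g (rep c)))⁻¹ * g) *
      (sec c (act g (rep c)))⁻¹) * s)) = g
  rw [← hR, ← hB, ← hs]
  group

noncomputable def theEquiv (hζ : ζ ≠ 0) : Uset F n ζ ≃ Sset F n ζ × (Mx F n)ˣ where
  toFun := fwd
  invFun := bwd
  left_inv := left_inv hζ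
  right_inv := right_inv

end CardUAux

/-- `|U_{ζ,n}(F_q)| = |GL_n(F_q)| · |S_{ζ,n}(F_q)|`, where `S_{ζ,n}` is the set of
similarity classes (conjugation orbits) of `n×n` matrices `B` with `B` similar to `ζ·B`. -/
theorem card_U_eq_card_GL_mul_card_classes {F : Type*} [Field F] [Fintype F] (n : ℕ)
    (ζ : F) (hζ : ζ ≠ 0) :
    Nat.card {p : Matrix (Fin n) (Fin n) F × Matrix (Fin n) (Fin n) F //
        p.1 * p.2 = ζ • (p.2 * p.1) ∧ IsUnit p.1} =
      Nat.card (GL (Fin n) F) *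
        Nat.card {O : Set (Matrix (Fin n) (Fin n) F) // ∃ B : Matrix (Fin n) (Fin n) F,
          (∃ P : GL (Fin n) F, (P : Matrix (Fin n) (Fin n) F) * B *
            ((P⁻¹ : GL (Fin n) F) : Matrix (Fin n) (Fin n) F) = ζ • B) ∧
          O = {C | ∃ P : GL (Fin n) F, C = (P : Matrix (Fin n) (Fin n) F) * B *
            ((P⁻¹ : GL (Fin n) F) : Matrix (Fin n) (Fin n) F)}} := by
  have e := CardUAux.theEquiv (F := F) (n := n) (ζ := ζ) hζ
  exact (Nat.card_congr e).trans (by rw [Nat.card_prod, mul_comm]; rfl)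
end

section
/- Let q > 1 be an integer and m a positive integer. Then for each n ≥ 0, the number of tuples (b₁, b₂, b₃, …) of nonnegative integers with Σᵢ i·bᵢ = n, weighted by Πᵢ q^⌊bᵢ/m⌋, equals the coefficient of x^n in the infinite product Π_{i≥1} (1 − x^{im}) / ((1 − x^i)(1 − q·x^{im})) as a formal power series. -/
open PowerSeries Finset
noncomputable def cF (q : ℚ) (m k d : ℕ) : ℚ := if k ∣ d then q ^ (d / k / m) else 0
noncomputable def Fq (q : ℚ) (m k : ℕ) : PowerSeries ℚ := PowerSeries.mk (cF q m k)

theorem key_nat (q : ℚ) (m : ℕ) (hm : 0 < m) (b : ℕ) :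
    ((if b = 0 then (1:ℚ) else 0) - if b = m then 1 else 0) =
      q ^ (b / m) - (if 1 ≤ b then q ^ ((b - 1) / m) else 0)
        - q * (if m ≤ b then q ^ ((b - m) / m) else 0)
        + q * (if m + 1 ≤ b then q ^ ((b - (m + 1)) / m) else 0) := by
  rcases b with _ | b'
  · rw [if_pos rfl, if_neg (by omega), if_neg (by omega), if_neg (by omega),
      if_neg (by omega), Nat.zero_div]
    ring
  · have h1 : 1 ≤ b' + 1 := Nat.succ_le_succ (Nat.zero_le _)
    rcases lt_trichotomy (b' + 1) m with h | h | h
    · rw [if_neg (by omega), if_neg (by omega), if_pos h1, if_neg (by omega),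
        if_neg (by omega), Nat.div_eq_of_lt h, Nat.div_eq_of_lt (by omega)]
      ring
    · subst h
      rw [if_neg (by omega), if_pos rfl, if_pos h1, if_pos le_rfl, if_neg (by omega),
        Nat.div_self hm, Nat.div_eq_of_lt (by omega), Nat.sub_self, Nat.zero_div]
      ring
    · rw [if_neg (by omega), if_neg (by omega), if_pos h1, if_pos (by omega), if_pos (by omega)]
      have e1 : (b' + 1) / m = (b' + 1 - m) / m + 1 := Nat.div_eq_sub_div hm (by omega)
      have e2 : (b' + 1 - 1) / m = (b' + 1 - 1 - m) / m + 1 := Nat.div_eq_sub_div hm (by omega)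
      have e3 : b' + 1 - 1 - m = b' + 1 - (m + 1) := by omega
      rw [e1, e2, e3, pow_succ, pow_succ]
      ring

theorem Fq_mul (q : ℚ) (m : ℕ) (hm : 0 < m) (k : ℕ) (hk : 0 < k) :
    Fq q m k * ((1 - X ^ k) * (1 - C (R := ℚ) q * X ^ (k * m))) = 1 - X ^ (k * m) := by
  have expand : Fq q m k * ((1 - (X : PowerSeries ℚ) ^ k) * (1 - C (R := ℚ) q * X ^ (k * m))) =
      Fq q m k - Fq q m k * X ^ k - C (R := ℚ) q * (Fq q m k * X ^ (k * m))
        + C (R := ℚ) q * (Fq q m k * X ^ (k * m + k)) := by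
    ring
  rw [expand]
  ext d
  simp only [map_add, map_sub, coeff_C_mul, coeff_mul_X_pow', Fq, coeff_mk, coeff_one,
    coeff_X_pow]
  by_cases hd : k ∣ d
  · obtain ⟨b, rfl⟩ := hd
    have hmk : k * m + k = k * (m + 1) := by ring
    rw [hmk]
    have hcF : ∀ x, cF q m k (k * x) = q ^ (x / m) := fun x => by
      rw [cF, if_pos (dvd_mul_right k x), Nat.mul_div_cancel_left x hk]
    have hle : ∀ x y : ℕ, (k * x ≤ k * y) ↔ x ≤ y := fun x y =>
      ⟨fun h => Nat.le_of_mul_le_mul_left h hk, fun h => Nat.mul_le_mul_left k h⟩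
    have c0 : (k * b = 0) ↔ b = 0 := by simp [hk.ne']
    have c1 : (k ≤ k * b) ↔ 1 ≤ b := by
      constructor
      · intro h
        by_contra hb
        have : b = 0 := by omega
        subst this
        simp at h
        omega
      · exact fun h => Nat.le_mul_of_pos_right k h
    have c4 : (k * b = k * m) ↔ b = m := mul_right_inj' hk.ne'
    have s1 : k * b - k = k * (b - 1) := by rw [Nat.mul_sub, mul_one]
    have s2 : k * b - k * m = k * (b - m) := (Nat.mul_sub k b m).symm
    have s3 : k * b - k * (m + 1) = k * (b - (m + 1)) := (Nat.mul_sub k b (m + 1)).symm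
    rw [s1, s2, s3]
    simp only [c0, c1, c4, hle, hcF]
    exact (key_nat q m hm b).symm
  · have h0 : d ≠ 0 := fun h => hd (h ▸ dvd_zero k)
    have hkm : d ≠ k * m := fun h => hd (h ▸ dvd_mul_right k m)
    have key : ∀ a : ℕ, k ∣ a → a ≤ d → cF q m k (d - a) = 0 := fun a ha hle =>
      if_neg fun hdvd => hd (by
        have := Nat.dvd_add hdvd ha
        rwa [Nat.sub_add_cancel hle] at this)
    rw [if_neg h0, if_neg hkm, cF, if_neg hd]
    split_ifs with h1 h2 h3 <;>
      simp_all [key _ (dvd_refl k), key _ (dvd_mul_right k m),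
        key _ ((dvd_mul_right k m).add (dvd_refl k))]

theorem factor_eq (q : ℚ) (m : ℕ) (hm : 0 < m) (k : ℕ) (hk : 0 < k)
    (H : Fq q m k * ((1 - X ^ k) * (1 - C (R := ℚ) q * X ^ (k * m))) = 1 - X ^ (k * m)) :
    (1 - (X : PowerSeries ℚ) ^ (k * m)) * ((1 - X ^ k) * (1 - C (R := ℚ) q * X ^ (k * m)))⁻¹
      = Fq q m k := by
  have hc : constantCoeff (R := ℚ) ((1 - (X : PowerSeries ℚ) ^ k) * (1 - C (R := ℚ) q * X ^ (k * m))) ≠ 0 := by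
    simp [constantCoeff_X, hk.ne', (Nat.mul_pos hk hm).ne', zero_pow]
  symm
  rw [eq_mul_inv_iff_mul_eq hc]
  exact H

theorem coeff_prod_high (q : ℚ) (m n : ℕ) (t : Finset ℕ) (ht : ∀ i ∈ t, n < i) :
    ∀ j ≤ n, coeff (R := ℚ) j (∏ i ∈ t, Fq q m (i + 1)) = if j = 0 then 1 else 0 := by
  induction t using Finset.induction_on with
  | empty => intro j hj; simp [coeff_one]
  | insert a s ha ih =>
    intro j hj
    rw [Finset.prod_insert ha, coeff_mul, Finset.sum_eq_single (0, j)]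
    · have h0 : coeff (R := ℚ) 0 (Fq q m (a + 1)) = 1 := by simp [Fq, cF]
      rw [h0, one_mul, ih (fun i hi => ht i (Finset.mem_insert_of_mem hi)) j hj]
    · rintro ⟨u, v⟩ hmem hne
      have huv : u + v = j := Finset.HasAntidiagonal.mem_antidiagonal.mp hmem
      have hu : u ≠ 0 := by
        rintro rfl
        exact hne (by simp [← huv])
      have : ¬ (a + 1) ∣ u := by
        intro hdvd
        have := Nat.le_of_dvd (Nat.pos_of_ne_zero hu) hdvd
        have hna := ht a (Finset.mem_insert_self a s)
        omega
      simp [Fq, cF, this]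
    · intro h
      exact absurd (Finset.HasAntidiagonal.mem_antidiagonal.mpr (zero_add j)) h

theorem coeff_prod_stable (q : ℚ) (m n : ℕ) (s : Finset ℕ) (hs : Finset.range (n + 1) ⊆ s) :
    coeff (R := ℚ) n (∏ i ∈ s, Fq q m (i + 1)) =
      coeff (R := ℚ) n (∏ i ∈ Finset.range (n + 1), Fq q m (i + 1)) := by
  rw [← Finset.prod_sdiff hs, coeff_mul, Finset.sum_eq_single (0, n)]
  · have h0 : coeff (R := ℚ) 0 (∏ i ∈ s \ Finset.range (n + 1), Fq q m (i + 1)) = 1 := by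
      rw [coeff_prod_high q m n _ (fun i hi => by
        have := (Finset.mem_sdiff.mp hi).2
        simp only [Finset.mem_range] at this
        omega) 0 (Nat.zero_le n)]
      simp
    rw [h0, one_mul]
  · rintro ⟨u, v⟩ hmem hne
    have huv : u + v = n := Finset.HasAntidiagonal.mem_antidiagonal.mp hmem
    have hu : u ≠ 0 := by
      rintro rfl
      exact hne (by simp [← huv])
    rw [coeff_prod_high q m n _ (fun i hi => by
        have := (Finset.mem_sdiff.mp hi).2
        simp only [Finset.mem_range] at this
        omega) u (by omega), if_neg hu, zero_mul]
  · intro h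
    exact absurd (Finset.HasAntidiagonal.mem_antidiagonal.mpr (zero_add n)) h

noncomputable def Pq (q : ℚ) (m : ℕ) : PowerSeries ℚ :=
  PowerSeries.mk fun d => coeff (R := ℚ) d (∏ i ∈ Finset.range (d + 1), Fq q m (i + 1))

theorem eval_eq (φ : PowerSeries ℚ) (x : Unit →₀ ℕ) : φ x = coeff (R := ℚ) (x ()) φ := by
  conv_lhs => rw [Finsupp.unique_single x]
  rfl

theorem hasProd_Fq (q : ℚ) (m : ℕ) :
    letI : TopologicalSpace (PowerSeries ℚ) :=
      inferInstanceAs (TopologicalSpace ((Unit →₀ ℕ) → ℚ))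
    HasProd (fun i : ℕ => Fq q m (i + 1)) (Pq q m) := by
  have h : ∀ x : Unit →₀ ℕ, Filter.Tendsto
      (fun s : Finset ℕ => coeff (R := ℚ) (x ()) (∏ i ∈ s, Fq q m (i + 1)))
      Filter.atTop (nhds (coeff (R := ℚ) (x ()) (Pq q m))) := by
    intro x
    apply Filter.Tendsto.congr' _ tendsto_const_nhds
    filter_upwards [Filter.eventually_ge_atTop (Finset.range (x () + 1))] with s hs
    rw [Pq, coeff_mk, coeff_prod_stable q m _ s hs]
  exact tendsto_pi_nhds.mpr fun x => by simp only [eval_eq]; exact h x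

def Lb (b : ℕ →₀ ℕ) : ℕ →₀ ℕ :=
  ⟨b.support, fun i => (i + 1) * b i, fun a => by
    simp [Finsupp.mem_support_iff]⟩

noncomputable def gb (l : ℕ →₀ ℕ) : ℕ →₀ ℕ :=
  Finsupp.onFinset l.support (fun i => l i / (i + 1)) fun a ha =>
    Finsupp.mem_support_iff.mpr fun h => ha (by simp [h])

@[simp] theorem Lb_apply (b : ℕ →₀ ℕ) (i : ℕ) : Lb b i = (i + 1) * b i := rfl
@[simp] theorem Lb_support (b : ℕ →₀ ℕ) : (Lb b).support = b.support := rfl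
@[simp] theorem gb_apply (l : ℕ →₀ ℕ) (i : ℕ) : gb l i = l i / (i + 1) := rfl

theorem gb_Lb (b : ℕ →₀ ℕ) : gb (Lb b) = b :=
  Finsupp.ext fun i => by
    simp [Nat.mul_div_cancel_left _ (Nat.succ_pos i)]

theorem support_sub_range {b : ℕ →₀ ℕ} {n : ℕ}
    (h : ∑ i ∈ b.support, (i + 1) * b i = n) : b.support ⊆ Finset.range (n + 1) := by
  intro i hi
  rw [Finset.mem_range]
  have h1 : (i + 1) * b i ≤ n := h ▸ Finset.single_le_sum
    (f := fun i => (i + 1) * b i) (fun _ _ => Nat.zero_le _) hi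
  have hbi : 0 < b i := Nat.pos_of_ne_zero (Finsupp.mem_support_iff.mp hi)
  have h2 : i + 1 ≤ (i + 1) * b i := Nat.le_mul_of_pos_right _ hbi
  omega

theorem Lb_mem {b : ℕ →₀ ℕ} {n : ℕ} (h : ∑ i ∈ b.support, (i + 1) * b i = n) :
    Lb b ∈ (Finset.finsuppAntidiag (Finset.range (n + 1)) n).filter
      (fun l => ∀ i ∈ Finset.range (n + 1), (i + 1) ∣ l i) := by
  rw [Finset.mem_filter, Finset.mem_finsuppAntidiag]
  refine ⟨⟨?_, by rw [Lb_support]; exact support_sub_range h⟩, fun i _ => ⟨b i, rfl⟩⟩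
  have hz : ∀ x ∈ Finset.range (n + 1), x ∉ b.support → Lb b x = 0 := fun x _ hx => by
    simp [Finsupp.notMem_support_iff.mp hx]
  rw [← Finset.sum_subset (support_sub_range h) hz]
  exact h

theorem mem_t_iff (n : ℕ) (b : ℕ →₀ ℕ) :
    b ∈ ((Finset.finsuppAntidiag (Finset.range (n + 1)) n).filter
      (fun l => ∀ i ∈ Finset.range (n + 1), (i + 1) ∣ l i)).image gb ↔
    ∑ i ∈ b.support, (i + 1) * b i = n := by
  constructor
  · rintro hb
    obtain ⟨l, hl, rfl⟩ := Finset.mem_image.mp hb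
    rw [Finset.mem_filter, Finset.mem_finsuppAntidiag] at hl
    obtain ⟨⟨hsum, hls⟩, hD⟩ := hl
    have hsupp : (gb l).support ⊆ Finset.range (n + 1) :=
      (Finsupp.support_onFinset_subset).trans hls
    have h1 : ∑ i ∈ (gb l).support, (i + 1) * gb l i
        = ∑ i ∈ Finset.range (n + 1), (i + 1) * gb l i :=
      Finset.sum_subset hsupp fun x _ hx => by
        simp [Finsupp.notMem_support_iff.mp hx]
    have h2 : ∑ i ∈ Finset.range (n + 1), (i + 1) * gb l i
        = ∑ i ∈ Finset.range (n + 1), l i :=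
      Finset.sum_congr rfl fun i hi => by rw [gb_apply, Nat.mul_div_cancel' (hD i hi)]
    rw [h1, h2]
    exact hsum
  · intro h
    exact Finset.mem_image.mpr ⟨Lb b, Lb_mem h, gb_Lb b⟩

theorem coeff_eq_sum (q : ℚ) (m : ℕ) (hm : 0 < m) (n : ℕ) :
    coeff (R := ℚ) n (∏ i ∈ Finset.range (n + 1), Fq q m (i + 1)) =
      ∑ b ∈ ((Finset.finsuppAntidiag (Finset.range (n + 1)) n).filter
        (fun l => ∀ i ∈ Finset.range (n + 1), (i + 1) ∣ l i)).image gb,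
        ∏ i ∈ b.support, q ^ (b i / m) := by
  rw [PowerSeries.coeff_prod]
  simp only [Fq, coeff_mk]
  rw [← Finset.sum_filter_of_ne (p := fun l => ∀ i ∈ Finset.range (n + 1), (i + 1) ∣ l i)
    (fun l _ hl i hi => by
      by_contra hdvd
      exact hl (Finset.prod_eq_zero hi (if_neg hdvd)))]
  rw [Finset.sum_image]
  · refine Finset.sum_congr rfl fun l hl => ?_
    rw [Finset.mem_filter, Finset.mem_finsuppAntidiag] at hl
    obtain ⟨⟨hsum, hls⟩, hD⟩ := hl
    have hsupp : (gb l).support ⊆ Finset.range (n + 1) :=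
      (Finsupp.support_onFinset_subset).trans hls
    have hprod : ∏ i ∈ Finset.range (n + 1), cF q m (i + 1) (l i)
        = ∏ i ∈ Finset.range (n + 1), q ^ (gb l i / m) :=
      Finset.prod_congr rfl fun i hi => by rw [cF, if_pos (hD i hi), gb_apply]
    rw [hprod]
    exact (Finset.prod_subset hsupp fun x _ hx => by
      simp [Finsupp.notMem_support_iff.mp hx]).symm
  · intro l1 h1 l2 h2 hg
    rw [Finset.mem_coe, Finset.mem_filter, Finset.mem_finsuppAntidiag] at h1 h2
    ext i
    by_cases hi : i ∈ Finset.range (n + 1)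
    · have e1 : l1 i = (i + 1) * gb l1 i := (Nat.mul_div_cancel' (h1.2 i hi)).symm
      have e2 : l2 i = (i + 1) * gb l2 i := (Nat.mul_div_cancel' (h2.2 i hi)).symm
      rw [e1, e2, hg]
    · have z1 : l1 i = 0 := by
        by_contra hz
        exact hi (h1.1.2 (Finsupp.mem_support_iff.mpr hz))
      have z2 : l2 i = 0 := by
        by_contra hz
        exact hi (h2.1.2 (Finsupp.mem_support_iff.mpr hz))
      rw [z1, z2]

open PowerSeries

/-- For `q > 1` and `m ≥ 1`, the number of finitely-supported tuples `(b₁, b₂, …)` of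
nonnegative integers with `Σᵢ i·bᵢ = n`, weighted by `Πᵢ q^⌊bᵢ/m⌋`, equals the coefficient
of `x^n` in `Π_{i≥1} (1 − x^{im}) / ((1 − x^i)(1 − q·x^{im}))`.  The infinite product is a
`tprod` with respect to the coefficientwise (product) topology on `ℚ⟦X⟧`. -/
theorem weighted_tuple_count_eq_coeff (q : ℤ) (hq : 1 < q) (m : ℕ) (hm : 0 < m) (n : ℕ) :
    letI : TopologicalSpace (PowerSeries ℚ) :=
      inferInstanceAs (TopologicalSpace ((Unit →₀ ℕ) → ℚ))
    PowerSeries.coeff (R := ℚ) n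
        (∏' i : ℕ, ((1 - (X : PowerSeries ℚ) ^ ((i + 1) * m)) *
          ((1 - (X : PowerSeries ℚ) ^ (i + 1)) *
            (1 - PowerSeries.C (R := ℚ) (q : ℚ) * (X : PowerSeries ℚ) ^ ((i + 1) * m)))⁻¹)) =
      ∑ᶠ (b : ℕ →₀ ℕ) (_ : ∑ i ∈ b.support, (i + 1) * b i = n),
        ∏ i ∈ b.support, (q : ℚ) ^ (b i / m) := by
  letI : TopologicalSpace (PowerSeries ℚ) :=
    inferInstanceAs (TopologicalSpace ((Unit →₀ ℕ) → ℚ))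
  haveI : T2Space (PowerSeries ℚ) := inferInstanceAs (T2Space ((Unit →₀ ℕ) → ℚ))
  have hfac : ∀ i : ℕ, (1 - (X : PowerSeries ℚ) ^ ((i + 1) * m)) *
      ((1 - (X : PowerSeries ℚ) ^ (i + 1)) *
        (1 - PowerSeries.C (R := ℚ) (q : ℚ) * (X : PowerSeries ℚ) ^ ((i + 1) * m)))⁻¹
      = Fq (q : ℚ) m (i + 1) := fun i =>
    factor_eq (q : ℚ) m hm (i + 1) (Nat.succ_pos i)
      (Fq_mul (q : ℚ) m hm (i + 1) (Nat.succ_pos i))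
  have hp : HasProd (fun i : ℕ => Fq (q : ℚ) m (i + 1)) (Pq q m) := hasProd_Fq (q : ℚ) m
  erw [tprod_congr hfac, hp.tprod_eq]
  rw [Pq, coeff_mk,
    coeff_eq_sum (q : ℚ) m hm n]
  exact (finsum_cond_eq_sum_of_cond_iff _ fun {b} _ => (mem_t_iff n b).symm).symm
end

section
/- Let q be a prime power and ζ ∈ F_q nonzero. Then the number of pairs (A,B) of n×n matrices over F_q with A nilpotent and AB = ζBA equals the number of pairs (A,B) with A nilpotent and AB = BA; i.e., |N_{ζ,n}(F_q)| = |N_{1,n}(F_q)| for all n. -/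
open Polynomial Module
open scoped DirectSum
universe u
variable {F : Type u} [Field F]
noncomputable def tw (c : F) : F[X] →ₐ[F] F[X] := aeval (C c * X)
lemma tw_tw (c d : F) (r : F[X]) : tw c (tw d r) = tw (d*c) r := by
  unfold tw
  rw [← Polynomial.aeval_algHom_apply]
  congr 1
  rw [map_mul, aeval_C, aeval_X, ← mul_assoc]
  congr 1
  rw [Polynomial.algebraMap_eq, ← C_mul]
lemma tw_one (r : F[X]) : tw (1:F) r = r := by simp [tw]
lemma tw_X_mul (c : F) (r : F[X]) : tw c (X * r) = (C c * X) * tw c r := by simp [tw]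

lemma span_stable (c : F) (p : F[X]) (hp : Irreducible p) (e k : ℕ)
    (hd : (X:F[X])^k ∈ Ideal.span {p^e}) : tw c (p^e) ∈ Ideal.span {p^e} := by
  cases e with
  | zero => simp [Ideal.span_singleton_one]
  | succ e =>
    have hpX : p ∣ X := by
      have h1 : p ^ (e+1) ∣ (X:F[X])^k := Ideal.mem_span_singleton.mp hd
      exact hp.prime.dvd_of_dvd_pow ((dvd_pow_self p (Nat.succ_ne_zero e)).trans h1)
    obtain ⟨u, hu⟩ := (hp.associated_of_dvd Polynomial.irreducible_X hpX).symm
    obtain ⟨a, ha, hua⟩ := Polynomial.isUnit_iff.mp u.isUnit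
    have hpXa : p = X * C a := by rw [hua, hu]
    have htwp : tw c p = C c * p := by
      rw [hpXa]
      simp only [tw, map_mul, aeval_X, aeval_C, Polynomial.algebraMap_eq]
      ring
    rw [map_pow, htwp, mul_pow]
    exact Ideal.mem_span_singleton.mpr (dvd_mul_left _ _)

noncomputable def twQ (c : F) (I : Ideal F[X]) (h : I ≤ I.comap (tw c)) :
    (F[X] ⧸ I) →ₗ[F] (F[X] ⧸ I) := (Ideal.quotientMapₐ I (tw c) h).toLinearMap

lemma twQ_mk (c : F) (I : Ideal F[X]) (h : I ≤ I.comap (tw c)) (r : F[X]) :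
    twQ c I h (Ideal.Quotient.mk I r) = Ideal.Quotient.mk I (tw c r) := by
  simp [twQ, Ideal.quotientMap_mk]

lemma le_comap_of_mem (c : F) (q : F[X]) (hm : tw c q ∈ Ideal.span {q}) :
    Ideal.span {q} ≤ (Ideal.span {q}).comap (tw c) := by
  rw [Ideal.span_le]
  intro x hx
  simp only [Set.mem_singleton_iff] at hx
  subst hx
  exact hm

noncomputable def twQE (c : F) (hc : c ≠ 0) (I : Ideal F[X]) (h : I ≤ I.comap (tw c))
    (h' : I ≤ I.comap (tw c⁻¹)) : (F[X] ⧸ I) ≃ₗ[F] (F[X] ⧸ I) := by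
  refine LinearEquiv.ofLinear (twQ c I h) (twQ c⁻¹ I h') ?_ ?_ <;>
  · apply LinearMap.ext
    intro x
    obtain ⟨r, rfl⟩ := Ideal.Quotient.mk_surjective x
    simp [twQ_mk, tw_tw, hc, tw_one]

lemma twQE_twist (c : F) (hc : c ≠ 0) (I : Ideal F[X]) (h h') (y : F[X] ⧸ I) :
    twQE c hc I h h' ((X : F[X]) • y) = c • ((X : F[X]) • (twQE c hc I h h' y)) := by
  obtain ⟨r, rfl⟩ := Ideal.Quotient.mk_surjective y
  show twQ c I h _ = c • ((X:F[X]) • twQ c I h _)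
  have hs : ∀ (a : F[X]) (s : F[X]), a • (Ideal.Quotient.mk I s) = Ideal.Quotient.mk I (a * s) :=
    fun a s => rfl
  have hsF : ∀ (s : F[X]), c • (Ideal.Quotient.mk I s) = Ideal.Quotient.mk I (c • s) :=
    fun s => (Submodule.Quotient.mk_smul I c s).symm
  rw [hs, twQ_mk, twQ_mk, hs, tw_X_mul, mul_assoc, hsF]
  congr 1
  rw [Polynomial.smul_eq_C_mul]

theorem exists_twist {V : Type u} [AddCommGroup V] [Module F V] [FiniteDimensional F V]
    (f : V →ₗ[F] V) (hf : IsNilpotent f) (ζ : F) (hζ : ζ ≠ 0) :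
    ∃ g : V ≃ₗ[F] V, ∀ v, g (f v) = ζ • f (g v) := by
  obtain ⟨k, hk⟩ := hf
  have hann : ∀ x : Module.AEval' f, ((X:F[X])^k) • x = 0 := by
    intro x
    apply (Module.AEval'.of f).symm.injective
    rw [Module.AEval.of_symm_smul]
    simp [hk]
  have htor : Module.IsTorsion F[X] (Module.AEval' f) := fun x =>
    ⟨⟨(X:F[X])^k, mem_nonZeroDivisors_of_ne_zero (pow_ne_zero _ X_ne_zero)⟩, hann x⟩
  obtain ⟨ι, hι, p, hp, e, ⟨E⟩⟩ := Module.equiv_directSum_of_isTorsion htor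
  haveI := hι
  haveI : DecidableEq ι := Classical.decEq ι
  set Q := fun i : ι => F[X] ⧸ Ideal.span {p i ^ e i} with hQ
  have hd : ∀ i, (X:F[X])^k ∈ Ideal.span {p i ^ e i} := by
    intro i
    have hz : ∀ z : ⨁ i, Q i, ((X:F[X])^k) • z = 0 := by
      intro z
      have h1 : ((X:F[X])^k) • z = E (((X:F[X])^k) • E.symm z) := by
        rw [map_smul, E.apply_symm_apply]
      rw [h1, hann, map_zero]
    have h2 := hz (DirectSum.lof F[X] ι Q i (Ideal.Quotient.mk _ 1))
    rw [← map_smul] at h2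
    have h3 := congrArg (fun w => w i) h2
    simp only [DirectSum.lof_apply] at h3
    rw [← Ideal.Quotient.eq_zero_iff_mem]
    have h4 : ((X:F[X])^k) • (Ideal.Quotient.mk (Ideal.span {p i ^ e i}) 1)
        = Ideal.Quotient.mk (Ideal.span {p i ^ e i}) ((X:F[X])^k) := by
      show Ideal.Quotient.mk _ ((X:F[X])^k * 1) = _
      rw [mul_one]
    rw [← h4]
    exact h3.trans rfl
  have hcom : ∀ (i : ι) (c : F), Ideal.span {p i ^ e i} ≤ (Ideal.span {p i ^ e i}).comap (tw c) :=
    fun i c => le_comap_of_mem c _ (span_stable c _ (hp i) _ k (hd i))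
  set τ : ∀ i, Q i ≃ₗ[F] Q i := fun i => twQE ζ hζ _ (hcom i ζ) (hcom i ζ⁻¹) with hτ
  set G : (⨁ i, Q i) ≃ₗ[F] ⨁ i, Q i := DFinsupp.mapRange.linearEquiv τ with hG
  have hGtw : ∀ x : ⨁ i, Q i, G ((X:F[X]) • x) = ζ • ((X:F[X]) • G x) := by
    intro x
    refine DFinsupp.ext fun i => ?_
    simp only [hG, DFinsupp.mapRange.linearEquiv_apply, DFinsupp.mapRange_apply,
      DFinsupp.smul_apply]
    exact twQE_twist ζ hζ _ _ _ (x i)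
  set EF : Module.AEval' f ≃ₗ[F] ⨁ i, Q i := E.restrictScalars F with hEF
  set oF : V ≃ₗ[F] Module.AEval' f := Module.AEval'.of f with hoF
  refine ⟨oF ≪≫ₗ EF ≪≫ₗ G ≪≫ₗ EF.symm ≪≫ₗ oF.symm, fun v => ?_⟩
  simp only [LinearEquiv.trans_apply]
  have h1 : oF (f v) = (X:F[X]) • oF v := (Module.AEval'.X_smul_of f v).symm
  have h2 : ∀ m, EF ((X:F[X]) • m) = (X:F[X]) • EF m := fun m => E.map_smul _ _
  have h4 : ∀ w, EF.symm ((X:F[X]) • w) = (X:F[X]) • EF.symm w := fun w => E.symm.map_smul _ _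
  have h5 : ∀ m, oF.symm ((X:F[X]) • m) = f (oF.symm m) := Module.AEval'.of_symm_X_smul f
  rw [h1, h2, hGtw, map_smul, h4, map_smul, h5]

theorem exists_GL (n : ℕ) (A : Matrix (Fin n) (Fin n) F)
    (hA : IsNilpotent A) (ζ : F) (hζ : ζ ≠ 0) :
    ∃ P : (Matrix (Fin n) (Fin n) F)ˣ,
      A * P = ζ • ((P : Matrix (Fin n) (Fin n) F) * A) := by
  have hf : IsNilpotent (Matrix.toLin' A) := hA.map (Matrix.toLinAlgEquiv' (R := F) (n := Fin n))
  obtain ⟨g, hg⟩ := exists_twist (Matrix.toLin' A) hf ζ⁻¹ (inv_ne_zero hζ)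
  set P : Matrix (Fin n) (Fin n) F := LinearMap.toMatrix' (g : (Fin n → F) →ₗ[F] (Fin n → F))
  set Pinv : Matrix (Fin n) (Fin n) F :=
    LinearMap.toMatrix' (g.symm : (Fin n → F) →ₗ[F] (Fin n → F))
  have hcomp : ((g : (Fin n → F) →ₗ[F] (Fin n → F)) ∘ₗ Matrix.toLin' A)
      = ζ⁻¹ • (Matrix.toLin' A ∘ₗ (g : (Fin n → F) →ₗ[F] (Fin n → F))) := by
    apply LinearMap.ext
    intro v
    simpa using hg v
  have hPA : P * A = ζ⁻¹ • (A * P) := by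
    have h1 := congrArg LinearMap.toMatrix' hcomp
    rw [LinearMap.toMatrix'_comp, map_smul, LinearMap.toMatrix'_comp,
      LinearMap.toMatrix'_toLin'] at h1
    exact h1
  have hunit1 : P * Pinv = 1 := by
    rw [← LinearMap.toMatrix'_comp, ← LinearMap.toMatrix'_id (R := F) (n := Fin n)]
    congr 1
    apply LinearMap.ext
    intro v
    simp
  have hunit2 : Pinv * P = 1 := by
    rw [← LinearMap.toMatrix'_comp, ← LinearMap.toMatrix'_id (R := F) (n := Fin n)]
    congr 1
    apply LinearMap.ext
    intro v
    simp
  refine ⟨⟨P, Pinv, hunit1, hunit2⟩, ?_⟩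
  show A * P = ζ • (P * A)
  rw [hPA, smul_smul, mul_inv_cancel₀ hζ, one_smul]


set_option maxHeartbeats 1000000 in
/-- `|N_{ζ,n}(F_q)| = |N_{1,n}(F_q)|`: the number of pairs `(A, B)` of `n×n` matrices with
`A` nilpotent and `AB = ζ·BA` equals the number with `A` nilpotent and `AB = BA`. -/
theorem card_nilpotent_zeta_commuting_eq {F : Type*} [Field F] [Fintype F]
    (ζ : F) (hζ : ζ ≠ 0) (n : ℕ) :
    Nat.card {p : Matrix (Fin n) (Fin n) F × Matrix (Fin n) (Fin n) F //
        p.1 * p.2 = ζ • (p.2 * p.1) ∧ IsNilpotent p.1} =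
      Nat.card {p : Matrix (Fin n) (Fin n) F × Matrix (Fin n) (Fin n) F //
        p.1 * p.2 = p.2 * p.1 ∧ IsNilpotent p.1} := by
  classical
  set Pf : Matrix (Fin n) (Fin n) F → (Matrix (Fin n) (Fin n) F)ˣ := fun A =>
    if h : ∃ P : (Matrix (Fin n) (Fin n) F)ˣ,
        A * P = ζ • ((P : Matrix (Fin n) (Fin n) F) * A) then h.choose else 1 with hPf
  have hP : ∀ A : Matrix (Fin n) (Fin n) F, IsNilpotent A →
      A * (Pf A) = ζ • ((Pf A : Matrix (Fin n) (Fin n) F) * A) := by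
    intro A hA
    have h : ∃ P : (Matrix (Fin n) (Fin n) F)ˣ,
        A * P = ζ • ((P : Matrix (Fin n) (Fin n) F) * A) := exists_GL n A hA ζ hζ
    simp only [hPf, dif_pos h]
    exact h.choose_spec
  have hPinv : ∀ A : Matrix (Fin n) (Fin n) F, IsNilpotent A →
      (((Pf A)⁻¹ : (Matrix (Fin n) (Fin n) F)ˣ) : Matrix (Fin n) (Fin n) F) * A
        = ζ • (A * (((Pf A)⁻¹ : (Matrix (Fin n) (Fin n) F)ˣ) : Matrix (Fin n) (Fin n) F)) := by
    intro A hA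
    have h := hP A hA
    set Pm : Matrix (Fin n) (Fin n) F := ((Pf A : (Matrix (Fin n) (Fin n) F)ˣ) : Matrix (Fin n) (Fin n) F)
    set Pi : Matrix (Fin n) (Fin n) F := ((((Pf A)⁻¹ : (Matrix (Fin n) (Fin n) F)ˣ)) : Matrix (Fin n) (Fin n) F)
    have hp1 : Pm * Pi = 1 := Units.mul_inv _
    have hp2 : Pi * Pm = 1 := Units.inv_mul _
    calc Pi * A = Pi * A * (Pm * Pi) := by rw [hp1, mul_one]
      _ = Pi * (A * Pm) * Pi := by simp only [mul_assoc]
      _ = Pi * (ζ • (Pm * A)) * Pi := by rw [h]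
      _ = ζ • ((Pi * Pm) * (A * Pi)) := by
          simp only [Matrix.mul_smul, Matrix.smul_mul, mul_assoc]
      _ = ζ • (A * Pi) := by rw [hp2, one_mul]
  have fwd : ∀ A B : Matrix (Fin n) (Fin n) F, IsNilpotent A → A * B = ζ • (B * A) →
      A * ((((Pf A)⁻¹ : (Matrix (Fin n) (Fin n) F)ˣ) : Matrix (Fin n) (Fin n) F) * B)
        = ((((Pf A)⁻¹ : (Matrix (Fin n) (Fin n) F)ˣ) : Matrix (Fin n) (Fin n) F) * B) * A := by
    intro A B hA hc
    have h := hPinv A hA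
    set Pi : Matrix (Fin n) (Fin n) F := ((((Pf A)⁻¹ : (Matrix (Fin n) (Fin n) F)ˣ)) : Matrix (Fin n) (Fin n) F)
    have h' : A * Pi = ζ⁻¹ • (Pi * A) := by
      rw [h, smul_smul, inv_mul_cancel₀ hζ, one_smul]
    calc A * (Pi * B) = (A * Pi) * B := by rw [mul_assoc]
      _ = (ζ⁻¹ • (Pi * A)) * B := by rw [h']
      _ = ζ⁻¹ • (Pi * (A * B)) := by simp only [Matrix.smul_mul, mul_assoc]
      _ = ζ⁻¹ • (Pi * (ζ • (B * A))) := by rw [hc]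
      _ = (ζ⁻¹ * ζ) • (Pi * (B * A)) := by rw [Matrix.mul_smul, smul_smul]
      _ = (Pi * B) * A := by rw [inv_mul_cancel₀ hζ, one_smul, mul_assoc]
  have bwd : ∀ A B : Matrix (Fin n) (Fin n) F, IsNilpotent A → A * B = B * A →
      A * ((Pf A : Matrix (Fin n) (Fin n) F) * B)
        = ζ • (((Pf A : Matrix (Fin n) (Fin n) F) * B) * A) := by
    intro A B hA hc
    have h := hP A hA
    set Pm : Matrix (Fin n) (Fin n) F := ((Pf A : (Matrix (Fin n) (Fin n) F)ˣ) : Matrix (Fin n) (Fin n) F)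
    calc A * (Pm * B) = (A * Pm) * B := by rw [mul_assoc]
      _ = (ζ • (Pm * A)) * B := by rw [h]
      _ = ζ • (Pm * (A * B)) := by simp only [Matrix.smul_mul, mul_assoc]
      _ = ζ • (Pm * (B * A)) := by rw [hc]
      _ = ζ • ((Pm * B) * A) := by rw [mul_assoc]
  refine Nat.card_congr ⟨
    fun x => ⟨(x.1.1, (((Pf x.1.1)⁻¹ : (Matrix (Fin n) (Fin n) F)ˣ) :
        Matrix (Fin n) (Fin n) F) * x.1.2), fwd x.1.1 x.1.2 x.2.2 x.2.1, x.2.2⟩,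
    fun y => ⟨(y.1.1, (Pf y.1.1 : Matrix (Fin n) (Fin n) F) * y.1.2),
      bwd y.1.1 y.1.2 y.2.2 y.2.1, y.2.2⟩, ?_, ?_⟩
  · intro x
    apply Subtype.ext
    refine Prod.ext rfl ?_
    show (Pf x.1.1 : Matrix (Fin n) (Fin n) F) *
      ((((Pf x.1.1)⁻¹ : (Matrix (Fin n) (Fin n) F)ˣ) : Matrix (Fin n) (Fin n) F) * x.1.2) = x.1.2
    rw [← mul_assoc, Units.mul_inv, one_mul]
  · intro y
    apply Subtype.ext
    refine Prod.ext rfl ?_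
    show (((Pf y.1.1)⁻¹ : (Matrix (Fin n) (Fin n) F)ˣ) : Matrix (Fin n) (Fin n) F) *
      ((Pf y.1.1 : Matrix (Fin n) (Fin n) F) * y.1.2) = y.1.2
    rw [← mul_assoc, Units.inv_mul, one_mul]
end

section
/- Let F be a field, ζ ∈ F nonzero, and J the single nilpotent Jordan block of size k (with ones on the superdiagonal and zeros elsewhere). Then the dimension of the space of k×k matrices B over F satisfying J·B = ζ·B·J equals k. -/
section Aux

variable {F : Type*} [Field F] {k : ℕ} (ζ : F)

/-- The candidate solution determined by its first row `c`. -/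
noncomputable def jordanSol (c : Fin k → F) : Matrix (Fin k) (Fin k) F :=
  Matrix.of fun i j => if (i : ℕ) ≤ (j : ℕ) then
    ζ ^ (i : ℕ) * c ⟨(j : ℕ) - (i : ℕ), lt_of_le_of_lt (Nat.sub_le _ _) j.isLt⟩ else 0

lemma jordanSol_apply (c : Fin k → F) (i j : Fin k) :
    jordanSol ζ c i j = if (i : ℕ) ≤ (j : ℕ) then
      ζ ^ (i : ℕ) * c ⟨(j : ℕ) - (i : ℕ), lt_of_le_of_lt (Nat.sub_le _ _) j.isLt⟩ else 0 := rfl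

noncomputable def jordanSolL : (Fin k → F) →ₗ[F] Matrix (Fin k) (Fin k) F where
  toFun := jordanSol ζ
  map_add' c d := by
    ext i j
    simp only [jordanSol_apply, Matrix.add_apply, Pi.add_apply]
    split_ifs <;> ring
  map_smul' a c := by
    ext i j
    simp only [jordanSol_apply, Matrix.smul_apply, Pi.smul_apply, smul_eq_mul,
      RingHom.id_apply]
    split_ifs <;> ring

end Aux

/-- For `J` the nilpotent Jordan block of size `k` and `ζ ≠ 0`, the space of `k×k`
matrices `B` with `J·B = ζ·B·J` has dimension `k`. -/
theorem jordan_block_zeta_centralizer_dim {F : Type*} [Field F] (k : ℕ) (ζ : F) (hζ : ζ ≠ 0)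
    (J : Matrix (Fin k) (Fin k) F)
    (hJ : ∀ i j : Fin k, J i j = if (j : ℕ) = (i : ℕ) + 1 then 1 else 0) :
    Module.finrank F (LinearMap.ker
      (LinearMap.mulLeft F J - ζ • LinearMap.mulRight F J)) = k := by
  -- entry formulas for J * B and B * J
  have hL : ∀ (B : Matrix (Fin k) (Fin k) F) (i j : Fin k),
      (J * B) i j = if h : (i : ℕ) + 1 < k then B ⟨(i : ℕ) + 1, h⟩ j else 0 := by
    intro B i j
    rw [Matrix.mul_apply]
    split_ifs with h
    · rw [Finset.sum_eq_single (⟨(i : ℕ) + 1, h⟩ : Fin k)]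
      · simp [hJ]
      · intro b _ hb
        rw [hJ, if_neg, zero_mul]
        intro hb'
        exact hb (Fin.ext hb')
      · simp
    · apply Finset.sum_eq_zero
      intro b _
      rw [hJ, if_neg, zero_mul]
      omega
  have hR : ∀ (B : Matrix (Fin k) (Fin k) F) (i j : Fin k),
      (B * J) i j = if h : 0 < (j : ℕ) then
        B i ⟨(j : ℕ) - 1, lt_of_le_of_lt (Nat.sub_le _ _) j.isLt⟩ else 0 := by
    intro B i j
    rw [Matrix.mul_apply]
    split_ifs with h
    · rw [Finset.sum_eq_single (⟨(j : ℕ) - 1, lt_of_le_of_lt (Nat.sub_le _ _) j.isLt⟩ : Fin k)]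
      · rw [hJ, if_pos (by simp only [Fin.val_mk]; omega), mul_one]
      · intro b _ hb
        rw [hJ, if_neg, mul_zero]
        intro hb'
        exact hb (Fin.ext (by simp only [Fin.val_mk]; omega))
      · simp
    · apply Finset.sum_eq_zero
      intro b _
      rw [hJ, if_neg, mul_zero]
      omega
  -- membership characterization
  have hmem : ∀ B : Matrix (Fin k) (Fin k) F,
      B ∈ LinearMap.ker (LinearMap.mulLeft F J - ζ • LinearMap.mulRight F J) ↔
      ∀ i j : Fin k, (J * B) i j = ζ * (B * J) i j := by
    intro B
    rw [LinearMap.mem_ker, LinearMap.sub_apply, LinearMap.smul_apply,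
      LinearMap.mulLeft_apply, LinearMap.mulRight_apply, sub_eq_zero]
    constructor
    · intro h i j
      have := congrFun (congrFun h i) j
      simpa using this
    · intro h
      ext i j
      simpa using h i j
  -- jordanSol lands in the kernel
  have hsolmem : ∀ c : Fin k → F,
      jordanSol ζ c ∈ LinearMap.ker (LinearMap.mulLeft F J - ζ • LinearMap.mulRight F J) := by
    intro c
    rw [hmem]
    intro i j
    rw [hL, hR]
    split_ifs with h1 h2
    · -- i+1 < k, 0 < j
      rw [jordanSol_apply, jordanSol_apply]
      simp only [Fin.val_mk]
      by_cases h3 : (i : ℕ) + 1 ≤ (j : ℕ)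
      · rw [if_pos h3, if_pos (by omega)]
        have he : (j : ℕ) - 1 - (i : ℕ) = (j : ℕ) - ((i : ℕ) + 1) := by omega
        simp only [he]
        ring
      · rw [if_neg h3, if_neg (by omega), mul_zero]
    · -- i+1 < k, j = 0
      rw [jordanSol_apply]
      simp only [Fin.val_mk]
      rw [if_neg (by omega), mul_zero]
    · -- i+1 = k, 0 < j ; then j-1 < i, so entry is 0
      rw [jordanSol_apply]
      simp only [Fin.val_mk]
      rw [if_neg (by omega), mul_zero]
    · rw [mul_zero]
  -- the restricted linear map
  set φ : (Fin k → F) →ₗ[F]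
      (LinearMap.ker (LinearMap.mulLeft F J - ζ • LinearMap.mulRight F J)) :=
    LinearMap.codRestrict _ (jordanSolL ζ) hsolmem with hφ
  have hinj : Function.Injective φ := by
    intro c d hcd
    funext j
    have := congrArg (fun B => (B : Matrix (Fin k) (Fin k) F) ⟨0, j.pos⟩ j)
      (congrArg Subtype.val hcd)
    simp only [hφ, LinearMap.codRestrict_apply] at this
    have h0 : (jordanSolL ζ c : Matrix (Fin k) (Fin k) F) ⟨0, j.pos⟩ j
        = (jordanSolL ζ d : Matrix (Fin k) (Fin k) F) ⟨0, j.pos⟩ j := this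
    simpa [jordanSolL, jordanSol_apply, Fin.eta] using h0
  have hsurj : Function.Surjective φ := by
    rintro ⟨B, hB⟩
    rw [hmem] at hB
    -- step relation
    have step : ∀ (i : Fin k) (h : (i : ℕ) + 1 < k) (j : Fin k),
        B ⟨(i : ℕ) + 1, h⟩ j = ζ * (if hj : 0 < (j : ℕ) then
          B i ⟨(j : ℕ) - 1, lt_of_le_of_lt (Nat.sub_le _ _) j.isLt⟩ else 0) := by
      intro i h j
      have := hB i j
      rw [hL, hR, dif_pos h] at this
      exact this
    -- main induction: every entry determined by the first row
    have main : ∀ (n : ℕ) (hn : n < k) (j : Fin k),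
        B ⟨n, hn⟩ j = if n ≤ (j : ℕ) then
          ζ ^ n * B ⟨0, Nat.lt_of_le_of_lt (Nat.zero_le _) hn⟩
            ⟨(j : ℕ) - n, lt_of_le_of_lt (Nat.sub_le _ _) j.isLt⟩ else 0 := by
      intro n
      induction n with
      | zero =>
        intro hn j
        simp [Fin.eta]
      | succ m ih =>
        intro hn j
        have hm : m < k := by omega
        have hs := step ⟨m, hm⟩ hn j
        simp only [Fin.val_mk] at hs
        rw [hs]
        split_ifs with hj hmj
        · -- 0 < j, m+1 ≤ j
          rw [ih hm]
          simp only [Fin.val_mk]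
          rw [if_pos (by omega)]
          have he : (j : ℕ) - 1 - m = (j : ℕ) - (m + 1) := by omega
          simp only [he]
          ring
        · -- 0 < j, ¬(m+1 ≤ j) : j - 1 < m
          rw [ih hm]
          simp only [Fin.val_mk]
          rw [if_neg (by omega), mul_zero]
        · -- j = 0
          omega
        · rw [mul_zero]
    refine ⟨fun j => B ⟨0, Nat.lt_of_le_of_lt (Nat.zero_le _) j.isLt⟩ j, ?_⟩
    apply Subtype.ext
    simp only [hφ, LinearMap.codRestrict_apply]
    ext i j
    show jordanSol ζ _ i j = B i j
    rw [jordanSol_apply]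
    have := main (i : ℕ) i.isLt j
    rw [Fin.eta] at this
    rw [this]
  have e : (Fin k → F) ≃ₗ[F]
      (LinearMap.ker (LinearMap.mulLeft F J - ζ • LinearMap.mulRight F J)) :=
    LinearEquiv.ofBijective φ ⟨hinj, hsurj⟩
  rw [← e.finrank_eq]
  simp
end

section
/- Let q be a prime power and ζ ∈ F_q^× . The count |K_{ζ,n}(F_q)| = #{(A,B) ∈ Mat_n(F_q)² : AB = ζBA} depends on ζ only through its multiplicative order m: if ζ, ζ' ∈ F_q^× have the same multiplicative order, then |K_{ζ,n}(F_q)| = |K_{ζ',n}(F_q)| for all n. -/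
set_option maxHeartbeats 1000000
set_option linter.unusedSectionVars false
open Polynomial Module Subgroup
universe u

lemma zpow_to_npow {G : Type*} [Group G] [Finite G] (x : G) (z : ℤ) : ∃ k : ℕ, x ^ z = x ^ k := by
  have h1 : x ^ z = x ^ (z % (orderOf x : ℤ)) := (zpow_mod_orderOf x z).symm
  have hpos : (0:ℤ) < (orderOf x : ℤ) := by exact_mod_cast orderOf_pos x
  refine ⟨(z % (orderOf x : ℤ)).toNat, ?_⟩
  rw [h1, ← zpow_natCast, Int.toNat_of_nonneg (Int.emod_nonneg z hpos.ne')]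

lemma exists_mutual_pow {G : Type*} [Group G] [Finite G] [IsCyclic G] (a b : G)
    (h : orderOf a = orderOf b) : ∃ k : ℕ, b = a ^ k := by
  obtain ⟨g, hg⟩ := IsCyclic.exists_generator (α := G)
  obtain ⟨i, hi'⟩ := mem_powers_iff_mem_zpowers.2 (hg a)
  obtain ⟨j, hj'⟩ := mem_powers_iff_mem_zpowers.2 (hg b)
  have hi : g ^ i = a := hi'
  have hj : g ^ j = b := hj'
  set N := orderOf g with hN
  have hNpos : 0 < N := orderOf_pos g
  have hgcd : Nat.gcd N i = Nat.gcd N j := by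
    have h1 : orderOf a = N / Nat.gcd N i := by rw [← hi, orderOf_pow]
    have h2 : orderOf b = N / Nat.gcd N j := by rw [← hj, orderOf_pow]
    have h3 := h; rw [h1, h2] at h3
    rw [← Nat.div_div_self (Nat.gcd_dvd_left N i) hNpos.ne',
        ← Nat.div_div_self (Nat.gcd_dvd_left N j) hNpos.ne', h3]
  have hd : g ^ ((Nat.gcd N i : ℤ)) = a ^ (Nat.gcdB N i) := by
    have hb := Nat.gcd_eq_gcd_ab N i
    calc g ^ ((Nat.gcd N i : ℤ))
        = g ^ ((N : ℤ) * Nat.gcdA N i + (i : ℤ) * Nat.gcdB N i) := by rw [← hb]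
      _ = (g ^ (N:ℤ)) ^ (Nat.gcdA N i) * (g ^ (i:ℤ)) ^ (Nat.gcdB N i) := by
          rw [zpow_add, zpow_mul, zpow_mul]
      _ = a ^ (Nat.gcdB N i) := by
          rw [zpow_natCast, zpow_natCast, pow_orderOf_eq_one, one_zpow, one_mul, hi]
  obtain ⟨c, hc⟩ : Nat.gcd N j ∣ j := Nat.gcd_dvd_right _ _
  have hzb : b = a ^ (Nat.gcdB N i * c) := by
    rw [← hj]
    calc g ^ j = g ^ ((j : ℤ)) := by rw [zpow_natCast]
      _ = (g ^ ((Nat.gcd N j : ℤ))) ^ (c : ℤ) := by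
          rw [← zpow_mul]; norm_cast; rw [← hc]
      _ = (g ^ ((Nat.gcd N i : ℤ))) ^ (c : ℤ) := by rw [hgcd]
      _ = a ^ (Nat.gcdB N i * c) := by rw [hd, ← zpow_mul]
  obtain ⟨k, hk⟩ := zpow_to_npow a (Nat.gcdB N i * c)
  exact ⟨k, by rw [hzb, hk]⟩



lemma exists_unit_twist {F : Type u} [Field F] {V : Type u} [AddCommGroup V] [Module F V]
    [FiniteDimensional F V] (ζ : Fˣ) (B : Module.End F V) (hB : IsNilpotent B) :
    ∃ P : (Module.End F V)ˣ,
      (P : Module.End F V) * B = (ζ : F) • (B * (P : Module.End F V)) := by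
  classical
  obtain ⟨N, hN⟩ := hB
  -- the F[X]-module structure on V via B
  set M := Module.AEval' B with hM
  have hkill : ∀ x : M, (X ^ N : F[X]) • x = 0 := by
    intro x
    apply (Module.AEval.of F V B).symm.injective
    rw [Module.AEval.of_symm_smul]
    simp [map_pow, hN]
  have tor : Module.IsTorsion F[X] M := by
    intro x
    refine ⟨⟨X ^ N, mem_nonZeroDivisors_of_ne_zero (pow_ne_zero _ Polynomial.X_ne_zero)⟩, ?_⟩
    exact hkill x
  obtain ⟨ι, hfin, p, hirr, e, ⟨Φ⟩⟩ :=
    Module.equiv_directSum_of_isTorsion (R := F[X]) (M := M) tor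
  set I : ι → Ideal F[X] := fun i => Ideal.span {p i ^ e i} with hI
  -- X ^ N annihilates each factor
  have hann : ∀ i, p i ^ e i ∣ X ^ N := by
    intro i
    have h1 : (X ^ N : F[X]) • (DirectSum.lof F[X] ι (fun i => F[X] ⧸ I i) i 1) = 0 := by
      have h2 := hkill (Φ.symm (DirectSum.lof F[X] ι (fun i => F[X] ⧸ I i) i 1))
      have h3 := congrArg Φ h2
      rw [map_smul, Φ.apply_symm_apply, map_zero] at h3
      exact h3
    rw [← map_smul] at h1
    have h4 := congrArg (fun z => z i) h1
    simp only [DirectSum.lof_eq_of, DirectSum.of_eq_same] at h4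
    have h5 : (X ^ N : F[X]) • (1 : F[X] ⧸ I i) = Ideal.Quotient.mk (I i) (X ^ N) := by
      have h := map_smul ((I i).mkQ) (X ^ N) (1 : F[X])
      simpa [Ideal.Quotient.mk_eq_mk, map_pow] using h.symm
    rw [h5, DFinsupp.zero_apply] at h4
    exact Ideal.mem_span_singleton.mp (Ideal.Quotient.eq_zero_iff_mem.mp h4)
  -- twisting algebra maps
  set σ : Fˣ → (F[X] →ₐ[F] F[X]) := fun u => aeval (C (u : F) * X) with hσ
  have hσX : ∀ u, σ u X = C (u : F) * X := by intro u; simp [hσ]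
  have hσC : ∀ u (c : F), σ u (C c) = C c := by intro u c; simp [hσ]
  have hσcomp : ∀ u v (r : F[X]), σ u (σ v r) = σ (v * u) r := by
    intro u v r
    have : (σ u).comp (σ v) = σ (v * u) := by
      apply Polynomial.algHom_ext
      rw [AlgHom.comp_apply, hσX, map_mul, hσX, hσC, hσX, ← mul_assoc, ← C_mul, Units.val_mul]
    calc σ u (σ v r) = ((σ u).comp (σ v)) r := rfl
      _ = σ (v * u) r := by rw [this]
  have hσid : ∀ r, σ 1 r = r := by
    intro r
    have : σ 1 = AlgHom.id F F[X] := by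
      apply Polynomial.algHom_ext; simp [hσ]
    rw [this]; rfl
  -- σ u preserves each ideal I i
  have hIpres : ∀ u i, ∀ x ∈ I i, σ u x ∈ I i := by
    intro u i x hx
    rw [hI] at hx ⊢
    simp only [Ideal.mem_span_singleton] at hx ⊢
    obtain ⟨c, rfl⟩ := hx
    rw [map_mul, map_pow]
    rcases Nat.eq_zero_or_pos (e i) with he | he
    · simp [he]
    · have hpdvd : p i ∣ σ u (p i) := by
        have hpX : p i ∣ X := by
          have h6 : p i ∣ X ^ N := dvd_trans (dvd_pow_self _ he.ne') (hann i)
          have hprime : Prime (p i) := (hirr i).prime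
          exact hprime.dvd_of_dvd_pow h6
        obtain ⟨d, hd⟩ := hpX
        have hdu : IsUnit d := by
          rcases Polynomial.irreducible_X.isUnit_or_isUnit hd with h | h
          · exact absurd h (hirr i).not_isUnit
          · exact h
        have h7 : σ u (p i) * σ u d = C (u : F) * (p i * d) := by
          rw [← map_mul, ← hd, hσX]
        have h8 : p i ∣ σ u (p i) * σ u d := by
          rw [h7]; exact Dvd.dvd.mul_left (dvd_mul_right _ _) _
        exact (hdu.map (σ u)).dvd_mul_right.mp h8
      exact dvd_mul_of_dvd_left (pow_dvd_pow_of_dvd hpdvd _) _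
  -- induced maps on quotients
  have hle : ∀ u i, I i ≤ (I i).comap (σ u).toRingHom := by
    intro u i x hx; exact hIpres u i x hx
  set T : Fˣ → ∀ i, F[X] ⧸ I i → F[X] ⧸ I i := fun u i =>
    Ideal.quotientMap (I i) (σ u).toRingHom (hle u i) with hT
  have hTmk : ∀ u i r, T u i (Ideal.Quotient.mk (I i) r) = Ideal.Quotient.mk (I i) (σ u r) := by
    intro u i r; rw [hT]; exact Ideal.quotientMap_mk
  have hsmulR : ∀ i (f s : F[X]),
      f • Ideal.Quotient.mk (I i) s = Ideal.Quotient.mk (I i) (f * s) := by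
    intro i f s
    simpa [Ideal.Quotient.mk_eq_mk, smul_eq_mul] using (map_smul ((I i).mkQ) f s).symm
  have hsmulF : ∀ i (c : F) (s : F[X]),
      c • Ideal.Quotient.mk (I i) s = Ideal.Quotient.mk (I i) (C c * s) := by
    intro i c s
    rw [← Ideal.Quotient.mk_eq_mk, ← Submodule.Quotient.mk_smul, Polynomial.smul_eq_C_mul]
    exact Ideal.Quotient.mk_eq_mk _
  have hTcomp : ∀ u v i q, T u i (T v i q) = T (v * u) i q := by
    intro u v i q
    obtain ⟨r, rfl⟩ := Ideal.Quotient.mk_surjective q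
    rw [hTmk, hTmk, hTmk, hσcomp]
  have hTid : ∀ i q, T 1 i q = q := by
    intro i q; obtain ⟨r, rfl⟩ := Ideal.Quotient.mk_surjective q
    rw [hTmk, hσid]
  have hTadd : ∀ u i q q', T u i (q + q') = T u i q + T u i q' := by
    intro u i q q'
    obtain ⟨r, rfl⟩ := Ideal.Quotient.mk_surjective q
    obtain ⟨r', rfl⟩ := Ideal.Quotient.mk_surjective q'
    rw [← map_add, hTmk, hTmk, hTmk, map_add, map_add]
  have hTsmulF : ∀ u i (c : F) q, T u i (c • q) = c • T u i q := by
    intro u i c q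
    obtain ⟨r, rfl⟩ := Ideal.Quotient.mk_surjective q
    rw [hsmulF, hTmk, map_mul, hσC, hTmk, hsmulF]
  have hTsmulX : ∀ u i q, T u i ((X : F[X]) • q) = (C (u : F) * X) • T u i q := by
    intro u i q
    obtain ⟨r, rfl⟩ := Ideal.Quotient.mk_surjective q
    rw [hsmulR, hTmk, map_mul, hσX, hTmk, hsmulR]
  -- the semilinear automorphism of the direct sum
  have hT0 : ∀ u i, T u i 0 = 0 := by
    intro u i
    simpa using hTmk u i 0
  set TL : Fˣ → (DirectSum ι fun i => F[X] ⧸ I i) →ₗ[F] (DirectSum ι fun i => F[X] ⧸ I i) :=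
    fun u =>
    { toFun := DFinsupp.mapRange (fun i => T u i) (fun i => hT0 u i)
      map_add' := fun x y => by
        refine DFunLike.ext _ _ fun i => ?_
        rw [DFinsupp.mapRange_apply, DFinsupp.add_apply, DFinsupp.add_apply,
          DFinsupp.mapRange_apply, DFinsupp.mapRange_apply]
        exact hTadd u i (x i) (y i)
      map_smul' := fun c x => by
        refine DFunLike.ext _ _ fun i => ?_
        rw [RingHom.id_apply, DFinsupp.mapRange_apply, DFinsupp.smul_apply, DFinsupp.smul_apply,
          DFinsupp.mapRange_apply]
        exact hTsmulF u i c (x i) } with hTL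
  have hTLapply : ∀ u y i, TL u y i = T u i (y i) := by
    intro u y i
    show DFinsupp.mapRange (fun i => T u i) (fun i => hT0 u i) y i = T u i (y i)
    rw [DFinsupp.mapRange_apply]
  have hTLcomp : ∀ (u : Fˣ) y, TL u (TL u⁻¹ y) = y := by
    intro u y
    refine DFunLike.ext _ _ fun i => ?_
    rw [hTLapply, hTLapply, hTcomp, inv_mul_cancel, hTid]
  have hTLcomp' : ∀ (u : Fˣ) y, TL u⁻¹ (TL u y) = y := by
    intro u y
    refine DFunLike.ext _ _ fun i => ?_
    rw [hTLapply, hTLapply, hTcomp, mul_inv_cancel, hTid]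
  have hCQsmul : ∀ i (c : F) (q : F[X] ⧸ I i), (C c : F[X]) • q = c • q := by
    intro i c q
    obtain ⟨r, rfl⟩ := Ideal.Quotient.mk_surjective q
    rw [hsmulR, hsmulF]
  have hCDS : ∀ (c : F) (y : DirectSum ι fun i => F[X] ⧸ I i), (C c : F[X]) • y = c • y := by
    intro c y
    refine DFunLike.ext _ _ fun i => ?_
    rw [DFinsupp.smul_apply, DFinsupp.smul_apply, hCQsmul]
  have hTLX : ∀ y, TL ζ ((X : F[X]) • y) = (ζ : F) • ((X : F[X]) • TL ζ y) := by
    intro y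
    refine DFunLike.ext _ _ fun i => ?_
    rw [hTLapply, DFinsupp.smul_apply, hTsmulX, DFinsupp.smul_apply, DFinsupp.smul_apply,
      mul_smul, hCQsmul, hTLapply]
  -- Φ interacts with F-scalars
  have hΦF : ∀ (c : F) (m : M), Φ (c • m) = c • Φ m := by
    intro c m
    rw [← Module.AEval.C_smul, map_smul, hCDS]
  have hΦF' : ∀ (c : F) (y : DirectSum ι fun i => F[X] ⧸ I i),
      Φ.symm (c • y) = c • Φ.symm y := by
    intro c y
    rw [← hCDS, map_smul, Module.AEval.C_smul]
  -- assemble the linear automorphism of V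
  set ofB := Module.AEval'.of B with hofB
  set gf : V → V := fun v => ofB.symm (Φ.symm (TL ζ (Φ (ofB v)))) with hgf
  set gi : V → V := fun v => ofB.symm (Φ.symm (TL ζ⁻¹ (Φ (ofB v)))) with hgi
  have hgig : ∀ v, gi (gf v) = v := by
    intro v
    rw [hgf, hgi]
    simp only [LinearEquiv.apply_symm_apply]
    rw [hTLcomp']
    simp only [LinearEquiv.symm_apply_apply]
  have hggi : ∀ v, gf (gi v) = v := by
    intro v
    rw [hgf, hgi]
    simp only [LinearEquiv.apply_symm_apply]
    rw [hTLcomp]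
    simp only [LinearEquiv.symm_apply_apply]
  have hgadd : ∀ v w, gf (v + w) = gf v + gf w := by
    intro v w
    rw [hgf]
    simp only [map_add]
  have hgsmul : ∀ (c : F) v, gf (c • v) = c • gf v := by
    intro c v
    rw [hgf]
    simp only [map_smul]
    rw [hΦF, map_smul, hΦF']
    simp only [map_smul]
  set g : V ≃ₗ[F] V :=
    { toFun := gf
      invFun := gi
      left_inv := hgig
      right_inv := hggi
      map_add' := hgadd
      map_smul' := hgsmul } with hgdef
  have hg : ∀ v, gf (B v) = (ζ : F) • B (gf v) := by
    intro v
    rw [hgf]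
    show ofB.symm (Φ.symm (TL ζ (Φ (ofB (B v)))))
        = (ζ : F) • B (ofB.symm (Φ.symm (TL ζ (Φ (ofB v)))))
    have e1 : ofB (B v) = (X : F[X]) • ofB v := (Module.AEval'.X_smul_of B v).symm
    rw [e1, map_smul, hTLX, hΦF', map_smul]
    congr 1
    rw [map_smul, hofB, Module.AEval'.of_symm_X_smul]
  refine ⟨⟨g.toLinearMap, g.symm.toLinearMap, ?_, ?_⟩, ?_⟩
  · ext v
    exact g.apply_symm_apply v
  · ext v
    exact g.symm_apply_apply v
  · ext v
    have := hg v
    exact this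

section general
variable {F : Type u} [Field F] {E : Type*} [Ring E] [Algebra F E]

lemma comm_pow {c : F} {A B : E} (h : A * B = c • (B * A)) (k : ℕ) :
    A * B ^ k = c ^ k • (B ^ k * A) := by
  induction k with
  | zero => simp
  | succ k ih =>
    rw [pow_succ, ← mul_assoc, ih, smul_mul_assoc, mul_assoc, h, mul_smul_comm, smul_smul,
      ← pow_succ, ← mul_assoc, ← pow_succ]

lemma rel_mul {c d : F} {x y B : E} (hx : x * B = c • (B * x)) (hy : y * B = d • (B * y)) :
    (x * y) * B = (c * d) • (B * (x * y)) := by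
  rw [mul_assoc, hy, mul_smul_comm, ← mul_assoc, hx, smul_mul_assoc, smul_smul, mul_assoc,
    mul_comm d c]

lemma rel_inv {c : F} (hc : c ≠ 0) {B : E} {P : Eˣ}
    (hP : (P : E) * B = c • (B * (P : E))) :
    (↑P⁻¹ : E) * B = c⁻¹ • (B * (↑P⁻¹ : E)) := by
  have h2 := congrArg (fun x => (↑P⁻¹ : E) * x * (↑P⁻¹ : E)) hP
  simp only [mul_smul_comm, smul_mul_assoc] at h2
  simp only [← mul_assoc] at h2
  rw [Units.inv_mul, one_mul, Units.mul_inv_cancel_right] at h2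
  rw [h2, smul_smul, inv_mul_cancel₀ hc, one_smul]

lemma rel_mul' {c d : F} {A B₁ B₂ : E} (h1 : A * B₁ = c • (B₁ * A)) (h2 : A * B₂ = d • (B₂ * A)) :
    A * (B₁ * B₂) = (c * d) • ((B₁ * B₂) * A) := by
  rw [← mul_assoc, h1, smul_mul_assoc, mul_assoc, h2, mul_smul_comm, smul_smul, ← mul_assoc]

lemma rel_inv' {c : F} (hc : c ≠ 0) {A : E} {β : Eˣ}
    (hβ : A * (β : E) = c • ((β : E) * A)) :
    A * (↑β⁻¹ : E) = c⁻¹ • ((↑β⁻¹ : E) * A) := by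
  have h2 := congrArg (fun x => (↑β⁻¹ : E) * x * (↑β⁻¹ : E)) hβ
  simp only [mul_smul_comm, smul_mul_assoc] at h2
  simp only [← mul_assoc] at h2
  rw [Units.mul_inv_cancel_right, Units.inv_mul, one_mul] at h2
  rw [h2, smul_smul, inv_mul_cancel₀ hc, one_smul]

lemma unit_of_coe (γ : Eˣ) (hu : IsUnit (γ : E)) : hu.unit = γ :=
  Units.ext (by rw [IsUnit.unit_spec])

lemma nil_step {ζ ζ' : Fˣ} {A B : E} {P P' : Eˣ}
    (hP : (P : E) * B = (ζ : F) • (B * (P : E)))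
    (hP' : (P' : E) * B = (ζ' : F) • (B * (P' : E)))
    (hr : A * B = (ζ : F) • (B * A)) :
    ((P' : E) * (↑P⁻¹ : E) * A) * B = (ζ' : F) • (B * ((P' : E) * (↑P⁻¹ : E) * A)) := by
  have h := rel_mul (rel_mul hP' (rel_inv (Units.ne_zero ζ) hP)) hr
  rwa [mul_assoc ((ζ' : F)), inv_mul_cancel₀ (Units.ne_zero ζ), mul_one] at h

open Classical in
/-- choice of a unit `P` with `P * B = ζ • (B * P)`. -/
noncomputable def pickU (ζ : Fˣ) (B : E) : Eˣ :=
  if h : ∃ P : Eˣ, (P : E) * B = (ζ : F) • (B * (P : E)) then h.choose else 1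

open Classical in
lemma pickU_spec {ζ : Fˣ} {B : E} (h : ∃ P : Eˣ, (P : E) * B = (ζ : F) • (B * (P : E))) :
    ((pickU ζ B : Eˣ) : E) * B = (ζ : F) • (B * ((pickU ζ B : Eˣ) : E)) := by
  rw [pickU, dif_pos h]
  exact h.choose_spec

open Classical in
/-- choice of a unit `β` with `A * β = ζ • (β * A)`. -/
noncomputable def pickA (ζ : Fˣ) (A : E) : Eˣ :=
  if h : ∃ β : Eˣ, A * (β : E) = (ζ : F) • ((β : E) * A) then h.choose else 1

open Classical in
lemma pickA_spec {ζ : Fˣ} {A : E} (h : ∃ β : Eˣ, A * (β : E) = (ζ : F) • ((β : E) * A)) :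
    A * ((pickA ζ A : Eˣ) : E) = (ζ : F) • (((pickA ζ A : Eˣ) : E) * A) := by
  rw [pickA, dif_pos h]
  exact h.choose_spec

lemma Qexists_of {ζ ζ' : Fˣ} (hk : ∃ k : ℕ, ζ' = ζ ^ k) {A : E} {β : Eˣ}
    (hr : A * (β : E) = (ζ : F) • ((β : E) * A)) :
    ∃ γ : Eˣ, A * (γ : E) = (ζ' : F) • ((γ : E) * A) := by
  obtain ⟨k, rfl⟩ := hk
  refine ⟨β ^ k, ?_⟩
  rw [Units.val_pow_eq_pow_val, Units.val_pow_eq_pow_val]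
  exact comm_pow hr k

lemma Qmul {ζ ζ' : Fˣ} {A : E} {β δ δ' : Eˣ}
    (hβ : A * (β : E) = (ζ : F) • ((β : E) * A))
    (hδ : A * (δ : E) = (ζ : F) • ((δ : E) * A))
    (hδ' : A * (δ' : E) = (ζ' : F) • ((δ' : E) * A)) :
    A * ((β * δ⁻¹ * δ' : Eˣ) : E) = (ζ' : F) • (((β * δ⁻¹ * δ' : Eˣ) : E) * A) := by
  rw [Units.val_mul, Units.val_mul]
  have h := rel_mul' (rel_mul' hβ (rel_inv' (Units.ne_zero ζ) hδ)) hδ'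
  rwa [mul_inv_cancel₀ (Units.ne_zero ζ), one_mul] at h

/-- the invertible-sector bijection. -/
noncomputable def invEquiv (ζ ζ' : Fˣ) (hk : ∃ k : ℕ, ζ' = ζ ^ k) (hk' : ∃ t : ℕ, ζ = ζ' ^ t) :
    {p : E × Eˣ // p.1 * ((p.2 : Eˣ) : E) = (ζ : F) • (((p.2 : Eˣ) : E) * p.1)} ≃
      {p : E × Eˣ // p.1 * ((p.2 : Eˣ) : E) = (ζ' : F) • (((p.2 : Eˣ) : E) * p.1)} where
  toFun p :=
    ⟨(p.1.1, p.1.2 * (pickA ζ p.1.1)⁻¹ * pickA ζ' p.1.1), by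
      have hδ := pickA_spec (E := E) (ζ := ζ) (A := p.1.1) ⟨p.1.2, p.2⟩
      have hδ' := pickA_spec (E := E) (ζ := ζ') (A := p.1.1)
        (Qexists_of hk p.2)
      exact Qmul p.2 hδ hδ'⟩
  invFun p :=
    ⟨(p.1.1, p.1.2 * (pickA ζ' p.1.1)⁻¹ * pickA ζ p.1.1), by
      have hδ' := pickA_spec (E := E) (ζ := ζ') (A := p.1.1) ⟨p.1.2, p.2⟩
      have hδ := pickA_spec (E := E) (ζ := ζ) (A := p.1.1)
        (Qexists_of hk' p.2)
      exact Qmul p.2 hδ' hδ⟩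
  left_inv p := by
    apply Subtype.ext
    apply Prod.ext
    · rfl
    · show p.1.2 * (pickA ζ p.1.1)⁻¹ * pickA ζ' p.1.1 * (pickA ζ' p.1.1)⁻¹ * pickA ζ p.1.1
        = p.1.2
      rw [mul_inv_cancel_right, inv_mul_cancel_right]
  right_inv p := by
    apply Subtype.ext
    apply Prod.ext
    · rfl
    · show p.1.2 * (pickA ζ' p.1.1)⁻¹ * pickA ζ p.1.1 * (pickA ζ p.1.1)⁻¹ * pickA ζ' p.1.1
        = p.1.2
      rw [mul_inv_cancel_right, inv_mul_cancel_right]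

end general

section fitting
variable {F : Type u} [Field F] {V : Type u} [AddCommGroup V] [Module F V]
  [FiniteDimensional F V]

lemma unit_end_inj {W : Type u} [AddCommGroup W] [Module F W] (β : (Module.End F W)ˣ) :
    Function.Injective (β : Module.End F W) := by
  intro x y hxy
  have h1 : ((↑β⁻¹ * ↑β : Module.End F W)) x = ((↑β⁻¹ * ↑β : Module.End F W)) y := by
    simp only [Module.End.mul_apply, hxy]
  simpa [Units.inv_mul] using h1

lemma unit_end_surj {W : Type u} [AddCommGroup W] [Module F W] (β : (Module.End F W)ˣ) :
    Function.Surjective (β : Module.End F W) := by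
  intro y
  refine ⟨(↑β⁻¹ : Module.End F W) y, ?_⟩
  have h1 : ((↑β * ↑β⁻¹ : Module.End F W)) y = y := by
    rw [Units.mul_inv]
    rfl
  rw [Module.End.mul_apply] at h1
  exact h1

lemma nil_pow_eq_zero {W : Type u} [AddCommGroup W] [Module F W] [FiniteDimensional F W]
    {f : Module.End F W} (h : IsNilpotent f) {m : ℕ} (hm : Module.finrank F W ≤ m) :
    f ^ m = 0 := by
  obtain ⟨k, hk⟩ := h
  have hb : f ^ max k (Module.finrank F W) = 0 := by
    rw [show max k (Module.finrank F W) = (max k (Module.finrank F W) - k) + k by omega,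
      pow_add, hk, mul_zero]
  have h1 : LinearMap.ker (f ^ max k (Module.finrank F W)) = ⊤ := by
    rw [hb]; exact LinearMap.ker_zero
  have h2 := Module.End.ker_pow_eq_ker_pow_finrank_of_le (K := F) (V := W) (f := f) hm
  have h3 := Module.End.ker_pow_eq_ker_pow_finrank_of_le (K := F) (V := W) (f := f)
    (le_max_right k (Module.finrank F W))
  rw [← LinearMap.ker_eq_top, h2, ← h3, h1]

lemma fitting_isCompl (B : Module.End F V) :
    IsCompl (LinearMap.ker (B ^ Module.finrank F V))
      (LinearMap.range (B ^ Module.finrank F V)) := by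
  obtain ⟨m0, hm0⟩ :=
    Filter.eventually_atTop.mp (LinearMap.eventually_isCompl_ker_pow_range_pow B)
  have h1 := hm0 (max m0 (Module.finrank F V)) (le_max_left _ _)
  have hker : LinearMap.ker (B ^ max m0 (Module.finrank F V))
      = LinearMap.ker (B ^ Module.finrank F V) :=
    Module.End.ker_pow_eq_ker_pow_finrank_of_le (le_max_right _ _)
  have hrange : LinearMap.range (B ^ max m0 (Module.finrank F V))
      = LinearMap.range (B ^ Module.finrank F V) := by
    have hle : LinearMap.range (B ^ max m0 (Module.finrank F V))
        ≤ LinearMap.range (B ^ Module.finrank F V) := by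
      rintro x ⟨y, rfl⟩
      refine ⟨(B ^ (max m0 (Module.finrank F V) - Module.finrank F V)) y, ?_⟩
      rw [← Module.End.mul_apply, ← pow_add]
      congr 2
      omega
    refine (Submodule.eq_of_le_of_finrank_eq hle ?_).symm |>.symm
    have r1 := LinearMap.finrank_range_add_finrank_ker (B ^ max m0 (Module.finrank F V))
    have r2 := LinearMap.finrank_range_add_finrank_ker (B ^ Module.finrank F V)
    rw [hker] at r1
    omega
  rw [hker, hrange] at h1
  exact h1

lemma maps_ker {A B : Module.End F V} {c : F} (hc : c ≠ 0) (h : A * B = c • (B * A)) :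
    ∀ x ∈ LinearMap.ker (B ^ Module.finrank F V),
      A x ∈ LinearMap.ker (B ^ Module.finrank F V) := by
  intro x hx
  rw [LinearMap.mem_ker] at hx ⊢
  have h3 := congrArg (fun f : Module.End F V => f x) (comm_pow h (Module.finrank F V))
  simp only [Module.End.mul_apply, LinearMap.smul_apply] at h3
  rw [hx, map_zero] at h3
  rcases smul_eq_zero.mp h3.symm with h4 | h4
  · exact absurd h4 (pow_ne_zero _ hc)
  · exact h4

lemma maps_range {A B : Module.End F V} {c : F} (h : A * B = c • (B * A)) :
    ∀ x ∈ LinearMap.range (B ^ Module.finrank F V),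
      A x ∈ LinearMap.range (B ^ Module.finrank F V) := by
  rintro x ⟨y, rfl⟩
  have h3 := congrArg (fun f : Module.End F V => f y) (comm_pow h (Module.finrank F V))
  simp only [Module.End.mul_apply, LinearMap.smul_apply] at h3
  rw [h3]
  exact Submodule.smul_mem _ _ ⟨A y, rfl⟩

lemma maps_ker_self (B : Module.End F V) :
    ∀ x ∈ LinearMap.ker (B ^ Module.finrank F V),
      B x ∈ LinearMap.ker (B ^ Module.finrank F V) := by
  have h : B * B = (1 : F) • (B * B) := by rw [one_smul]
  exact maps_ker one_ne_zero h

lemma maps_range_self (B : Module.End F V) :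
    ∀ x ∈ LinearMap.range (B ^ Module.finrank F V),
      B x ∈ LinearMap.range (B ^ Module.finrank F V) := by
  have h : B * B = (1 : F) • (B * B) := by rw [one_smul]
  have := maps_range (c := (1 : F)) h
  simpa using this

/-- glue two endomorphisms of complementary submodules. -/
noncomputable def glue {U W : Submodule F V} (hc : IsCompl U W)
    (f : Module.End F U) (g : Module.End F W) : Module.End F V :=
  (Submodule.prodEquivOfIsCompl U W hc).toLinearMap ∘ₗ (f.prodMap g) ∘ₗ
    (Submodule.prodEquivOfIsCompl U W hc).symm.toLinearMap

lemma glue_apply {U W : Submodule F V} (hc : IsCompl U W) (f : Module.End F U)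
    (g : Module.End F W) (v : V) :
    glue hc f g v = Submodule.prodEquivOfIsCompl U W hc
      ((f.prodMap g) ((Submodule.prodEquivOfIsCompl U W hc).symm v)) := rfl

lemma glue_apply_left {U W : Submodule F V} (hc : IsCompl U W) (f : Module.End F U)
    (g : Module.End F W) (u : U) : glue hc f g ↑u = ↑(f u) := by
  rw [glue_apply, Submodule.prodEquivOfIsCompl_symm_apply_left, LinearMap.prodMap_apply]
  simp [Submodule.coe_prodEquivOfIsCompl']

lemma glue_apply_right {U W : Submodule F V} (hc : IsCompl U W) (f : Module.End F U)
    (g : Module.End F W) (w : W) : glue hc f g ↑w = ↑(g w) := by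
  rw [glue_apply, Submodule.prodEquivOfIsCompl_symm_apply_right, LinearMap.prodMap_apply]
  simp [Submodule.coe_prodEquivOfIsCompl']

lemma glue_mul {U W : Submodule F V} (hc : IsCompl U W) (f f' : Module.End F U)
    (g g' : Module.End F W) : glue hc f g * glue hc f' g' = glue hc (f * f') (g * g') := by
  ext v
  simp only [Module.End.mul_apply, glue_apply, LinearMap.prodMap_apply,
    LinearEquiv.symm_apply_apply]

lemma glue_smul {U W : Submodule F V} (hc : IsCompl U W) (c : F) (f : Module.End F U)
    (g : Module.End F W) : glue hc (c • f) (c • g) = c • glue hc f g := by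
  ext v
  simp only [glue_apply, LinearMap.prodMap_apply, LinearMap.smul_apply]
  rw [← Prod.smul_mk, map_smul]

lemma glue_one {U W : Submodule F V} (hc : IsCompl U W) :
    glue hc (1 : Module.End F U) (1 : Module.End F W) = 1 := by
  ext v
  simp only [glue_apply, LinearMap.prodMap_apply, Module.End.one_apply]
  rw [show ((((Submodule.prodEquivOfIsCompl U W hc).symm v).1),
      (((Submodule.prodEquivOfIsCompl U W hc).symm v).2))
      = (Submodule.prodEquivOfIsCompl U W hc).symm v from rfl]
  simp [Submodule.projection_add_projection_eq_self]

lemma glue_pow {U W : Submodule F V} (hc : IsCompl U W) (f : Module.End F U)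
    (g : Module.End F W) (k : ℕ) : (glue hc f g) ^ k = glue hc (f ^ k) (g ^ k) := by
  induction k with
  | zero => simp [glue_one]
  | succ k ih => rw [pow_succ, ih, glue_mul, ← pow_succ, ← pow_succ]

lemma glue_restrict {U W : Submodule F V} (hc : IsCompl U W) (f : Module.End F V)
    (hU : ∀ x ∈ U, f x ∈ U) (hW : ∀ x ∈ W, f x ∈ W) :
    glue hc (f.restrict hU) (f.restrict hW) = f := by
  ext v
  obtain ⟨u, w, hu, hw, rfl⟩ := Submodule.codisjoint_iff_exists_add_eq.mp hc.codisjoint v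
  rw [map_add, map_add,
    show (u : V) = ((⟨u, hu⟩ : U) : V) from rfl, glue_apply_left,
    show (w : V) = ((⟨w, hw⟩ : W) : V) from rfl, glue_apply_right,
    LinearMap.restrict_coe_apply, LinearMap.restrict_coe_apply]

lemma glue_ker {U W : Submodule F V} (hc : IsCompl U W) (g : Module.End F W)
    (hg : Function.Injective g) : LinearMap.ker (glue hc (0 : Module.End F U) g) = U := by
  ext v
  constructor
  · intro hv
    rw [LinearMap.mem_ker] at hv
    obtain ⟨u, w, hu, hw, rfl⟩ := Submodule.codisjoint_iff_exists_add_eq.mp hc.codisjoint v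
    rw [map_add, show (u : V) = ((⟨u, hu⟩ : U) : V) from rfl, glue_apply_left,
      show (w : V) = ((⟨w, hw⟩ : W) : V) from rfl, glue_apply_right] at hv
    simp only [LinearMap.zero_apply, ZeroMemClass.coe_zero, zero_add] at hv
    have h2 : g ⟨w, hw⟩ = 0 := by
      exact_mod_cast hv
    have h3 : (⟨w, hw⟩ : W) = 0 := hg (by rw [h2, map_zero])
    have h4 : w = 0 := by
      simpa using congrArg (Subtype.val) h3
    simpa [h4] using hu
  · intro hv
    rw [LinearMap.mem_ker, show v = ((⟨v, hv⟩ : U) : V) from rfl, glue_apply_left]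
    simp

lemma glue_range {U W : Submodule F V} (hc : IsCompl U W) (g : Module.End F W)
    (hg : Function.Surjective g) : LinearMap.range (glue hc (0 : Module.End F U) g) = W := by
  ext v
  constructor
  · rintro ⟨y, rfl⟩
    obtain ⟨u, w, hu, hw, rfl⟩ := Submodule.codisjoint_iff_exists_add_eq.mp hc.codisjoint y
    rw [map_add, show (u : V) = ((⟨u, hu⟩ : U) : V) from rfl, glue_apply_left,
      show (w : V) = ((⟨w, hw⟩ : W) : V) from rfl, glue_apply_right]
    simp only [LinearMap.zero_apply, ZeroMemClass.coe_zero, zero_add]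
    exact (g ⟨w, hw⟩).2
  · intro hv
    obtain ⟨w, hwv⟩ := hg ⟨v, hv⟩
    refine ⟨(w : V), ?_⟩
    rw [show ((w : V)) = ((w : W) : V) from rfl, glue_apply_right, hwv]

end fitting

section sigma
variable {F : Type u} [Field F] {V : Type u} [AddCommGroup V] [Module F V]
  [FiniteDimensional F V]

lemma glue_inj_left {U W : Submodule F V} (hc : IsCompl U W) {f f' : Module.End F U}
    {g g' : Module.End F W} (h : glue hc f g = glue hc f' g') : f = f' := by
  ext u
  have h2 := congrArg (fun L : Module.End F V => L ↑u) h
  simp only [glue_apply_left] at h2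
  exact h2

lemma glue_inj_right {U W : Submodule F V} (hc : IsCompl U W) {f f' : Module.End F U}
    {g g' : Module.End F W} (h : glue hc f g = glue hc f' g') : g = g' := by
  ext w
  have h2 := congrArg (fun L : Module.End F V => L ↑w) h
  simp only [glue_apply_right] at h2
  exact h2

lemma ker_glue_eq {U W : Submodule F V} (hc : IsCompl U W) {B₀ : Module.End F U}
    (hn : IsNilpotent B₀) (β : (Module.End F W)ˣ) :
    LinearMap.ker ((glue hc B₀ (β : Module.End F W)) ^ Module.finrank F V) = U := by
  rw [glue_pow, nil_pow_eq_zero hn (Submodule.finrank_le U),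
    show ((β : Module.End F W) ^ Module.finrank F V) = ↑(β ^ Module.finrank F V) from
      (Units.val_pow_eq_pow_val β _).symm]
  exact glue_ker hc _ (unit_end_inj _)

lemma range_glue_eq {U W : Submodule F V} (hc : IsCompl U W) {B₀ : Module.End F U}
    (hn : IsNilpotent B₀) (β : (Module.End F W)ˣ) :
    LinearMap.range ((glue hc B₀ (β : Module.End F W)) ^ Module.finrank F V) = W := by
  rw [glue_pow, nil_pow_eq_zero hn (Submodule.finrank_le U),
    show ((β : Module.End F W) ^ Module.finrank F V) = ↑(β ^ Module.finrank F V) from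
      (Units.val_pow_eq_pow_val β _).symm]
  exact glue_range hc _ (unit_end_surj _)

variable (F V) in
def Decomp := {q : Submodule F V × Submodule F V // IsCompl q.1 q.2}

variable (F V) in
def SP (ζ : Fˣ) := {p : Module.End F V × Module.End F V // p.1 * p.2 = (ζ : F) • (p.2 * p.1)}

variable (F) in
def NilP (ζ : Fˣ) (U : Submodule F V) :=
  {p : Module.End F U × Module.End F U //
    IsNilpotent p.2 ∧ p.1 * p.2 = (ζ : F) • (p.2 * p.1)}

variable (F) in
def InvP (ζ : Fˣ) (W : Submodule F V) :=
  {p : Module.End F W × (Module.End F W)ˣ //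
    p.1 * ((p.2 : (Module.End F W)ˣ) : Module.End F W)
      = (ζ : F) • (((p.2 : (Module.End F W)ˣ) : Module.End F W) * p.1)}

noncomputable def backFun (ζ : Fˣ) :
    (Σ d : Decomp F V, NilP F ζ d.1.1 × InvP F ζ d.1.2) → SP F V ζ := fun x =>
  ⟨(glue x.1.2 x.2.1.1.1 x.2.2.1.1, glue x.1.2 x.2.1.1.2 ↑x.2.2.1.2), by
    rw [glue_mul, glue_mul, x.2.1.2.2, x.2.2.2, glue_smul]⟩

lemma backFun_bij (ζ : Fˣ) : Function.Bijective (backFun (F := F) (V := V) ζ) := by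
  constructor
  · -- injective
    rintro ⟨⟨⟨U₁, W₁⟩, hc₁⟩, ⟨⟨⟨A₀, B₀⟩, hn, hr0⟩, ⟨⟨A₁, β⟩, hr1⟩⟩⟩
      ⟨⟨⟨U₂, W₂⟩, hc₂⟩, ⟨⟨⟨A₀', B₀'⟩, hn', hr0'⟩, ⟨⟨A₁', β'⟩, hr1'⟩⟩⟩ h
    have hA := congrArg (fun s : SP F V ζ => s.val.1) h
    have hB := congrArg (fun s : SP F V ζ => s.val.2) h
    simp only [backFun] at hA hB
    have hU : U₁ = U₂ := by
      have k1 := ker_glue_eq hc₁ hn β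
      have k2 := ker_glue_eq hc₂ hn' β'
      rw [hB] at k1
      exact k1.symm.trans k2
    have hW : W₁ = W₂ := by
      have k1 := range_glue_eq hc₁ hn β
      have k2 := range_glue_eq hc₂ hn' β'
      rw [hB] at k1
      exact k1.symm.trans k2
    subst hU
    subst hW
    have e1 : A₀ = A₀' := glue_inj_left hc₁ (by exact hA)
    have e2 : B₀ = B₀' := glue_inj_left hc₁ (by exact hB)
    have e3 : A₁ = A₁' := glue_inj_right hc₁ (by exact hA)
    have e4 : β = β' := Units.ext (glue_inj_right hc₁ (by exact hB))
    subst e1; subst e2; subst e3; subst e4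
    rfl
  · -- surjective
    rintro ⟨⟨A, B⟩, hr⟩
    have hc := fitting_isCompl B
    have hAU := maps_ker (Units.ne_zero ζ) hr
    have hAW := maps_range hr
    have hBU := maps_ker_self B
    have hBW := maps_range_self B
    have hnil : IsNilpotent (B.restrict hBU) := by
      refine ⟨Module.finrank F V, ?_⟩
      rw [Module.End.pow_restrict]
      ext x
      rw [LinearMap.restrict_coe_apply]
      simpa using LinearMap.mem_ker.mp x.2
    have hinj : Function.Injective (B.restrict hBW) := by
      intro x y hxy
      have h1 : B (↑x - ↑y) = 0 := by
        rw [map_sub, sub_eq_zero]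
        exact congrArg Subtype.val hxy
      have h2 : (↑x - ↑y : V) ∈ LinearMap.ker (B ^ Module.finrank F V) := by
        have hker1 : (↑x - ↑y : V) ∈ LinearMap.ker (B ^ (Module.finrank F V + 1)) := by
          rw [LinearMap.mem_ker, pow_succ, Module.End.mul_apply, h1, map_zero]
        rwa [Module.End.ker_pow_eq_ker_pow_finrank_of_le (Nat.le_succ _)] at hker1
      have h3 : (↑x - ↑y : V) ∈ LinearMap.range (B ^ Module.finrank F V) :=
        Submodule.sub_mem _ x.2 y.2
      have h4 : (↑x - ↑y : V) = 0 := (Submodule.disjoint_def.mp hc.disjoint) _ h2 h3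
      exact Subtype.coe_injective (sub_eq_zero.mp h4)
    have hsurj : Function.Surjective (B.restrict hBW) :=
      LinearMap.injective_iff_surjective.mp hinj
    have hval : ∀ z, (LinearEquiv.ofBijective (B.restrict hBW) ⟨hinj, hsurj⟩) z
        = (B.restrict hBW) z := fun z => rfl
    have hr0 : (A.restrict hAU) * (B.restrict hBU)
        = (ζ : F) • ((B.restrict hBU) * (A.restrict hAU)) := by
      ext x
      have h6 := congrArg (fun L : Module.End F V => L ↑x) hr
      simp only [Module.End.mul_apply, LinearMap.smul_apply] at h6
      simp only [Module.End.mul_apply, LinearMap.smul_apply, LinearMap.restrict_coe_apply,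
        SetLike.val_smul]
      exact h6
    have hr1 : (A.restrict hAW) * (B.restrict hBW)
        = (ζ : F) • ((B.restrict hBW) * (A.restrict hAW)) := by
      ext x
      have h6 := congrArg (fun L : Module.End F V => L ↑x) hr
      simp only [Module.End.mul_apply, LinearMap.smul_apply] at h6
      simp only [Module.End.mul_apply, LinearMap.smul_apply, LinearMap.restrict_coe_apply,
        SetLike.val_smul]
      exact h6
    refine ⟨⟨⟨(LinearMap.ker (B ^ Module.finrank F V),
      LinearMap.range (B ^ Module.finrank F V)), hc⟩,
      (⟨(A.restrict hAU, B.restrict hBU), hnil, hr0⟩,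
       ⟨(A.restrict hAW,
        ⟨B.restrict hBW,
         (LinearEquiv.ofBijective (B.restrict hBW) ⟨hinj, hsurj⟩).symm.toLinearMap,
         by ext z
            rw [Module.End.mul_apply]
            have h5 := (LinearEquiv.ofBijective (B.restrict hBW) ⟨hinj, hsurj⟩).apply_symm_apply z
            rw [hval] at h5
            rw [Module.End.one_apply]
            exact congrArg Subtype.val h5,
         by ext z
            rw [Module.End.mul_apply]
            have h5 := (LinearEquiv.ofBijective (B.restrict hBW) ⟨hinj, hsurj⟩).symm_apply_apply z
            rw [hval] at h5
            rw [Module.End.one_apply]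
            exact congrArg Subtype.val h5⟩), hr1⟩)⟩, ?_⟩
    apply Subtype.ext
    apply Prod.ext
    · exact glue_restrict hc A hAU hAW
    · exact glue_restrict hc B hBU hBW

/-- The Fitting decomposition bijection. -/
noncomputable def fittingEquiv (ζ : Fˣ) :
    SP F V ζ ≃ Σ d : Decomp F V, NilP F ζ d.1.1 × InvP F ζ d.1.2 :=
  (Equiv.ofBijective (backFun ζ) (backFun_bij ζ)).symm

/-- The nilpotent-sector bijection. -/
noncomputable def nilEquivU (ζ ζ' : Fˣ) :
    {p : Module.End F V × Module.End F V //
      IsNilpotent p.2 ∧ p.1 * p.2 = (ζ : F) • (p.2 * p.1)} ≃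
    {p : Module.End F V × Module.End F V //
      IsNilpotent p.2 ∧ p.1 * p.2 = (ζ' : F) • (p.2 * p.1)} where
  toFun p :=
    ⟨((↑(pickU ζ' p.1.2) * ↑(pickU ζ p.1.2)⁻¹ * p.1.1 : Module.End F V), p.1.2), p.2.1,
      nil_step (pickU_spec (exists_unit_twist ζ p.1.2 p.2.1))
        (pickU_spec (exists_unit_twist ζ' p.1.2 p.2.1)) p.2.2⟩
  invFun p :=
    ⟨((↑(pickU ζ p.1.2) * ↑(pickU ζ' p.1.2)⁻¹ * p.1.1 : Module.End F V), p.1.2), p.2.1,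
      nil_step (pickU_spec (exists_unit_twist ζ' p.1.2 p.2.1))
        (pickU_spec (exists_unit_twist ζ p.1.2 p.2.1)) p.2.2⟩
  left_inv p := by
    apply Subtype.ext
    apply Prod.ext
    · show (↑(pickU ζ p.1.2) * ↑(pickU ζ' p.1.2)⁻¹ *
        (↑(pickU ζ' p.1.2) * ↑(pickU ζ p.1.2)⁻¹ * p.1.1) : Module.End F V) = p.1.1
      rw [← mul_assoc, ← mul_assoc, Units.inv_mul_cancel_right, Units.mul_inv, one_mul]
    · rfl
  right_inv p := by
    apply Subtype.ext
    apply Prod.ext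
    · show (↑(pickU ζ' p.1.2) * ↑(pickU ζ p.1.2)⁻¹ *
        (↑(pickU ζ p.1.2) * ↑(pickU ζ' p.1.2)⁻¹ * p.1.1) : Module.End F V) = p.1.1
      rw [← mul_assoc, ← mul_assoc, Units.inv_mul_cancel_right, Units.mul_inv, one_mul]
    · rfl

end sigma

section main
variable {F : Type u} [Field F]

theorem card_zeta_commuting_depends_only_on_order_aux [Fintype F]
    (ζ ζ' : Fˣ) (h : orderOf ζ = orderOf ζ') (n : ℕ) :
    Nat.card {p : Matrix (Fin n) (Fin n) F × Matrix (Fin n) (Fin n) F //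
        p.1 * p.2 = (ζ : F) • (p.2 * p.1)} =
      Nat.card {p : Matrix (Fin n) (Fin n) F × Matrix (Fin n) (Fin n) F //
        p.1 * p.2 = (ζ' : F) • (p.2 * p.1)} := by
  classical
  obtain ⟨k, hk⟩ := exists_mutual_pow ζ ζ' h
  obtain ⟨t, ht⟩ := exists_mutual_pow ζ' ζ h.symm
  have me : ∀ u : Fˣ,
      {p : Matrix (Fin n) (Fin n) F × Matrix (Fin n) (Fin n) F //
        p.1 * p.2 = (u : F) • (p.2 * p.1)} ≃ SP F (Fin n → F) u := by
    intro u
    refine Equiv.subtypeEquiv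
      (Equiv.prodCongr Matrix.toLinAlgEquiv'.toEquiv Matrix.toLinAlgEquiv'.toEquiv) fun p => ?_
    constructor
    · intro hp
      show Matrix.toLinAlgEquiv' p.1 * Matrix.toLinAlgEquiv' p.2
        = (u : F) • (Matrix.toLinAlgEquiv' p.2 * Matrix.toLinAlgEquiv' p.1)
      calc Matrix.toLinAlgEquiv' p.1 * Matrix.toLinAlgEquiv' p.2
          = Matrix.toLinAlgEquiv' (p.1 * p.2) := (map_mul _ _ _).symm
        _ = Matrix.toLinAlgEquiv' ((u : F) • (p.2 * p.1)) := by rw [hp]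
        _ = Matrix.toLinAlgEquiv' (algebraMap F _ (u : F) * (p.2 * p.1)) := by
            rw [Algebra.smul_def]
        _ = algebraMap F _ (u : F) *
            (Matrix.toLinAlgEquiv' p.2 * Matrix.toLinAlgEquiv' p.1) := by
            rw [map_mul, AlgEquiv.commutes, map_mul]
        _ = (u : F) • (Matrix.toLinAlgEquiv' p.2 * Matrix.toLinAlgEquiv' p.1) :=
            (Algebra.smul_def _ _).symm
    · intro hp
      have hp' : Matrix.toLinAlgEquiv' p.1 * Matrix.toLinAlgEquiv' p.2
          = (u : F) • (Matrix.toLinAlgEquiv' p.2 * Matrix.toLinAlgEquiv' p.1) := hp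
      apply Matrix.toLinAlgEquiv'.injective
      calc Matrix.toLinAlgEquiv' (p.1 * p.2)
          = Matrix.toLinAlgEquiv' p.1 * Matrix.toLinAlgEquiv' p.2 := map_mul _ _ _
        _ = (u : F) • (Matrix.toLinAlgEquiv' p.2 * Matrix.toLinAlgEquiv' p.1) := hp'
        _ = algebraMap F _ (u : F) *
            (Matrix.toLinAlgEquiv' p.2 * Matrix.toLinAlgEquiv' p.1) := Algebra.smul_def _ _
        _ = Matrix.toLinAlgEquiv' (algebraMap F _ (u : F) * (p.2 * p.1)) := by
            rw [map_mul, AlgEquiv.commutes, map_mul]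
        _ = Matrix.toLinAlgEquiv' ((u : F) • (p.2 * p.1)) := by rw [← Algebra.smul_def]
  have big : SP F (Fin n → F) ζ ≃ SP F (Fin n → F) ζ' :=
    (fittingEquiv ζ).trans ((Equiv.sigmaCongrRight fun (d : Decomp F (Fin n → F)) =>
      Equiv.prodCongr
        ((nilEquivU (F := F) (V := ↥d.1.1) ζ ζ') :
          NilP F ζ d.1.1 ≃ NilP F ζ' d.1.1)
        ((invEquiv (E := Module.End F ↥d.1.2) ζ ζ' ⟨k, hk⟩ ⟨t, ht⟩) :
          InvP F ζ d.1.2 ≃ InvP F ζ' d.1.2)).trans (fittingEquiv ζ').symm)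
  calc Nat.card {p : Matrix (Fin n) (Fin n) F × Matrix (Fin n) (Fin n) F //
        p.1 * p.2 = (ζ : F) • (p.2 * p.1)}
      = Nat.card (SP F (Fin n → F) ζ) := Nat.card_congr (me ζ)
    _ = Nat.card (SP F (Fin n → F) ζ') := Nat.card_congr big
    _ = Nat.card {p : Matrix (Fin n) (Fin n) F × Matrix (Fin n) (Fin n) F //
        p.1 * p.2 = (ζ' : F) • (p.2 * p.1)} := (Nat.card_congr (me ζ')).symm

end main

/-- `|K_{ζ,n}(F_q)|` depends on `ζ` only through its multiplicative order: if
`ζ, ζ' ∈ F_q^×` have the same multiplicative order, then the counts of pairs `(A,B)` with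
`AB = ζBA` and with `AB = ζ'BA` agree for all `n`. -/
theorem card_zeta_commuting_depends_only_on_order {F : Type*} [Field F] [Fintype F]
    (ζ ζ' : Fˣ) (h : orderOf ζ = orderOf ζ') (n : ℕ) :
    Nat.card {p : Matrix (Fin n) (Fin n) F × Matrix (Fin n) (Fin n) F //
        p.1 * p.2 = (ζ : F) • (p.2 * p.1)} =
      Nat.card {p : Matrix (Fin n) (Fin n) F × Matrix (Fin n) (Fin n) F //
        p.1 * p.2 = (ζ' : F) • (p.2 * p.1)} :=
  card_zeta_commuting_depends_only_on_order_aux ζ ζ' h n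
end
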